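/- arXiv:2012.02982 — 6 statements merged into one kernel-verified Lean document; each statement's English description precedes it below -/
import Mathlib

section
/- For any integer n ≥ 2, any v, v* ∈ ℝ³ and any θ ∈ (0,π], the φ-average Θ_n(v,v*,θ) := (1/(2π)) ∫₀^{2π} |v'|^{2n} dφ equals ((1+cos θ)/2)^n |v|^{2n} + ((1−cos θ)/2)^n |v*|^{2n} + Λ_n(v,v*,θ), where, setting A_n = {(i,j,k) ∈ ℕ³ : i+j+k = n, i ≤ n−1, j ≤ n−1, k even}, Λ_n(v,v*,θ) = ∑_{(i,j,k) ∈ A_n} (n!/(i! j! ((k/2)!)²)) ((1+cos θ)/2)^i ((1−cos θ)/2)^j ((sin θ)/2)^k |v|^{2i} |v*|^{2j} (|v|²|v*|² − (v·v*)²)^{k/2}. -/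
open MeasureTheory Real Set

noncomputable section

abbrev V3 : Type := EuclideanSpace ℝ (Fin 3)

/-- Moment of order `p` of a measure on `ℝ³`. -/
def mom (p : ℝ) (f : Measure V3) : ℝ := ∫ v, ‖v‖ ^ p ∂f

/-- Moment of order `p`, valued in `[0,∞]`. -/
def momL (p : ℝ) (f : Measure V3) : ENNReal := ∫⁻ v, (‖v‖₊ : ENNReal) ^ p ∂f

/-- `(X/|X|, I X/|X|, J X/|X|)` is an orthonormal basis of `ℝ³` for every `X ≠ 0`,
and `I 0 = J 0 = 0`. -/
structure IsFrame (Ifun Jfun : V3 → V3) : Prop where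
  I_zero : Ifun 0 = 0
  J_zero : Jfun 0 = 0
  norm_I : ∀ X : V3, X ≠ 0 → ‖Ifun X‖ = ‖X‖
  norm_J : ∀ X : V3, X ≠ 0 → ‖Jfun X‖ = ‖X‖
  inner_X_I : ∀ X : V3, X ≠ 0 → (inner ℝ X (Ifun X) : ℝ) = 0
  inner_X_J : ∀ X : V3, X ≠ 0 → (inner ℝ X (Jfun X) : ℝ) = 0
  inner_I_J : ∀ X : V3, X ≠ 0 → (inner ℝ (Ifun X) (Jfun X) : ℝ) = 0

/-- `Γ(X,φ) = (cos φ) I(X) + (sin φ) J(X)`. -/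
def Gam (Ifun Jfun : V3 → V3) (X : V3) (φ : ℝ) : V3 :=
  Real.cos φ • Ifun X + Real.sin φ • Jfun X

/-- Post-collisional velocity `v'`. -/
def vpr (Ifun Jfun : V3 → V3) (v w : V3) (θ φ : ℝ) : V3 :=
  v - ((1 - Real.cos θ) / 2) • (v - w) + (Real.sin θ / 2) • Gam Ifun Jfun (v - w) φ

/-- Post-collisional velocity `v'_*`. -/
def vspr (Ifun Jfun : V3 → V3) (v w : V3) (θ φ : ℝ) : V3 :=
  w + ((1 - Real.cos θ) / 2) • (v - w) - (Real.sin θ / 2) • Gam Ifun Jfun (v - w) φ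

/-- Assumption `H₂(ν)`: `β` is measurable and `κ₁ θ^{-ν-1} ≤ β(θ) ≤ κ₂ θ^{-ν-1}` on `(0,π]`. -/
def H2cond (ν κ₁ κ₂ : ℝ) (β : ℝ → ℝ) : Prop :=
  Measurable β ∧ ∀ θ ∈ Ioc (0:ℝ) π, κ₁ * θ ^ (-ν - 1) ≤ β θ ∧ β θ ≤ κ₂ * θ ^ (-ν - 1)

/-- Bounded `C²` functions with bounded derivatives. -/
def C2b (Φ : V3 → ℝ) : Prop :=
  ContDiff ℝ 2 Φ ∧ ∀ k : ℕ, k ≤ 2 → ∃ C : ℝ, ∀ x, ‖iteratedFDeriv ℝ k Φ x‖ ≤ C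

/-- Boltzmann collision integral (hard potential exponent `γ`, angular cross section `β`)
tested against a function `Φ`. -/
def collInt (γ : ℝ) (β : ℝ → ℝ) (Ifun Jfun : V3 → V3) (f : Measure V3) (Φ : V3 → ℝ) : ℝ :=
  ∫ v, ∫ w,
    (∫ θ in Ioc (0:ℝ) π,
      (∫ φ in Ico (0:ℝ) (2 * π),
        (Φ (vpr Ifun Jfun v w θ φ) + Φ (vspr Ifun Jfun v w θ φ) - Φ v - Φ w)) * β θ)
    * ‖v - w‖ ^ γ ∂f ∂f

/-- Weak solution of the spatially homogeneous Boltzmann equation. -/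
structure WeakSol (γ : ℝ) (β : ℝ → ℝ) (Ifun Jfun : V3 → V3) (f : ℝ → Measure V3) : Prop where
  prob : ∀ t : ℝ, 0 ≤ t → IsProbabilityMeasure (f t)
  weakCont : ∀ g : V3 → ℝ, Continuous g → (∃ C, ∀ x, |g x| ≤ C) →
    ContinuousOn (fun t => ∫ v, g v ∂(f t)) (Ici (0:ℝ))
  momentum : ∀ t : ℝ, 0 ≤ t → (∫ v, v ∂(f t)) = 0
  energy : ∀ t : ℝ, 0 ≤ t → mom 2 (f t) = 1
  momBound : ∀ p : ℝ, 0 ≤ p → ∀ t₀ : ℝ, 0 < t₀ →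
    ∃ C : ℝ, ∀ t : ℝ, t₀ ≤ t → momL p (f t) ≤ ENNReal.ofReal C
  weakForm : ∀ Φ : V3 → ℝ, C2b Φ → ∀ t : ℝ, 0 ≤ t →
    HasDerivWithinAt (fun s => ∫ v, Φ v ∂(f s)) (collInt γ β Ifun Jfun (f t) Φ) (Ici (0:ℝ)) t

/- AUX LEMMAS -/
lemma parseval3 (X I J : V3) (hX : X ≠ 0)
    (hI : ‖I‖ = ‖X‖) (hJ : ‖J‖ = ‖X‖)
    (hXI : (inner ℝ X I : ℝ) = 0) (hXJ : (inner ℝ X J : ℝ) = 0)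
    (hIJ : (inner ℝ I J : ℝ) = 0) (v : V3) :
    (inner ℝ v X : ℝ)^2 + (inner ℝ v I : ℝ)^2 + (inner ℝ v J : ℝ)^2 = ‖v‖^2 * ‖X‖^2 := by
  have hXn : ‖X‖ ≠ 0 := norm_ne_zero_iff.mpr hX
  have hIX : (inner ℝ I X : ℝ) = 0 := by rw [real_inner_comm]; exact hXI
  have hJX : (inner ℝ J X : ℝ) = 0 := by rw [real_inner_comm]; exact hXJ
  have hJI : (inner ℝ J I : ℝ) = 0 := by rw [real_inner_comm]; exact hIJ
  set e : Fin 3 → V3 := ![(‖X‖)⁻¹ • X, (‖X‖)⁻¹ • I, (‖X‖)⁻¹ • J] with he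
  have key : ∀ (x y : V3), (inner ℝ ((‖X‖)⁻¹ • x) ((‖X‖)⁻¹ • y) : ℝ)
      = ‖X‖⁻¹ * ‖X‖⁻¹ * inner ℝ x y := by
    intro x y; rw [real_inner_smul_left, real_inner_smul_right]; ring
  have hnrm : ∀ (x : V3), ‖x‖ = ‖X‖ → ‖(‖X‖)⁻¹ • x‖ = 1 := by
    intro x hx
    rw [norm_smul, hx, norm_inv, norm_norm, inv_mul_cancel₀ hXn]
  have hon : Orthonormal ℝ e := by
    constructor
    · intro i
      fin_cases i <;>
        simp only [he, Fin.mk_zero, Fin.mk_one, Fin.reduceFinMk, Matrix.cons_val_zero,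
          Matrix.cons_val_one, Matrix.head_cons, Matrix.cons_val_two, Matrix.tail_cons] <;>
        [exact hnrm X rfl; exact hnrm I hI; exact hnrm J hJ]
    · intro i j hij
      fin_cases i <;> fin_cases j <;>
        simp only [he, Fin.mk_zero, Fin.mk_one, Fin.reduceFinMk, Matrix.cons_val_zero,
          Matrix.cons_val_one, Matrix.head_cons, Matrix.cons_val_two, Matrix.tail_cons] <;>
        first
          | exact absurd rfl hij
          | (rw [key]; first
              | (rw [hXI]; ring) | (rw [hXJ]; ring) | (rw [hIJ]; ring)
              | (rw [hIX]; ring) | (rw [hJX]; ring) | (rw [hJI]; ring))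
  have hsp : ⊤ ≤ Submodule.span ℝ (Set.range e) := by
    have hli := hon.linearIndependent
    have h1 : Module.finrank ℝ (Submodule.span ℝ (Set.range e)) = 3 := by
      rw [finrank_span_eq_card hli]; simp
    exact (Submodule.eq_top_of_finrank_eq (S := Submodule.span ℝ (Set.range e))
      (by rw [h1, finrank_euclideanSpace_fin])).ge
  set b : OrthonormalBasis (Fin 3) ℝ V3 := OrthonormalBasis.mk hon hsp with hb
  have hpar := b.sum_inner_mul_inner v v
  rw [real_inner_self_eq_norm_sq] at hpar
  have hbe : ∀ i, b i = e i := fun i => by rw [hb, OrthonormalBasis.coe_mk]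
  rw [Fin.sum_univ_three, hbe 0, hbe 1, hbe 2] at hpar
  simp only [he, Matrix.cons_val_zero, Matrix.cons_val_one, Matrix.head_cons,
    Matrix.cons_val_two, Matrix.tail_cons] at hpar
  rw [real_inner_smul_right v, real_inner_smul_right v, real_inner_smul_right v,
    real_inner_smul_left, real_inner_smul_left, real_inner_smul_left,
    real_inner_comm X v, real_inner_comm I v, real_inner_comm J v] at hpar
  rw [real_inner_comm v X, real_inner_comm v I, real_inner_comm v J] at hpar
  rw [← hpar]
  set p := (inner ℝ X v : ℝ)
  set q := (inner ℝ I v : ℝ)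
  set r := (inner ℝ J v : ℝ)
  field_simp

lemma prod_ratio (m : ℕ) :
    ∏ i ∈ Finset.range m, (2*(i:ℝ)+1)/(2*i+2) = ((2*m).choose m : ℝ) / 4^m := by
  induction m with
  | zero => simp
  | succ k ih =>
    rw [Finset.prod_range_succ, ih]
    have hc := Nat.succ_mul_centralBinom_succ k
    have hcr : ((k:ℝ)+1) * ((2*(k+1)).choose (k+1) : ℝ) = 2*(2*(k:ℝ)+1) * ((2*k).choose k : ℝ) := by
      have : ((k+1) * Nat.centralBinom (k+1) : ℕ) = (2 * (2*k+1) * Nat.centralBinom k : ℕ) := hc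
      have := congrArg (fun x : ℕ => (x:ℝ)) this
      push_cast [Nat.centralBinom] at this ⊢
      convert this using 2 <;> ring_nf
    have hk1 : ((k:ℝ)+1) ≠ 0 := by positivity
    have h2 : ((2*(k+1)).choose (k+1) : ℝ) = 2*(2*(k:ℝ)+1) * ((2*k).choose k : ℝ) / ((k:ℝ)+1) := by
      field_simp
      linarith [hcr]
    rw [h2]
    have h3 : (2*(k:ℝ)+2) ≠ 0 := by positivity
    have h5 : (4:ℝ)^k ≠ 0 := by positivity
    field_simp
    ring

lemma integral_cos_odd_two_pi (m : ℕ) : ∫ x in (0:ℝ)..(2*π), cos x ^ (2*m+1) = 0 := by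
  have h := @integral_sin_pow_mul_cos_pow_odd 0 (2*π) 0 m
  simp only [pow_zero, one_mul, Real.sin_zero] at h
  rw [h, Real.sin_two_pi, intervalIntegral.integral_same]

lemma integral_cos_pow_two_pi (m : ℕ) :
    ∫ x in (0:ℝ)..(2*π), cos x ^ (2*m) = 2*π * (((2*m).choose m : ℝ) / 4^m) := by
  have hper : Function.Periodic (fun x => Real.sin x ^ (2*m)) (2*π) := fun x => by
    simp [Real.sin_add_two_pi]
  have h1 : ∫ x in (0:ℝ)..(2*π), cos x ^ (2*m) = ∫ x in (0:ℝ)..(2*π), sin (x + π/2) ^ (2*m) := by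
    congr 1; ext x; rw [Real.sin_add_pi_div_two]
  have h2 : ∫ x in (0:ℝ)..(2*π), sin (x + π/2) ^ (2*m)
      = ∫ x in (π/2)..(π/2 + 2*π), sin x ^ (2*m) := by
    have := intervalIntegral.integral_comp_add_right (a := (0:ℝ)) (b := 2*π)
      (fun x => Real.sin x ^ (2*m)) (π/2)
    simpa [add_comm] using this
  have h3 : ∫ x in (π/2)..(π/2 + 2*π), sin x ^ (2*m) = ∫ x in (0:ℝ)..(0 + 2*π), sin x ^ (2*m) :=
    hper.intervalIntegral_add_eq (π/2) 0
  have h4 : ∫ x in (0:ℝ)..(2*π), sin x ^ (2*m)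
      = (∫ x in (0:ℝ)..π, sin x ^ (2*m)) + ∫ x in π..(2*π), sin x ^ (2*m) := by
    rw [intervalIntegral.integral_add_adjacent_intervals] <;>
      exact (continuous_sin.pow _).intervalIntegrable _ _
  have h5 : ∫ x in π..(2*π), sin x ^ (2*m) = ∫ x in (0:ℝ)..π, sin x ^ (2*m) := by
    have := intervalIntegral.integral_comp_add_right (a := (0:ℝ)) (b := π)
      (fun x => Real.sin x ^ (2*m)) π
    rw [zero_add] at this
    have e : π + π = 2*π := by ring
    rw [e] at this
    rw [← this]
    congr 1; ext x
    rw [Real.sin_add_pi, Even.neg_pow (even_two_mul m)]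
  rw [h1, h2, h3, zero_add, h4, h5, integral_sin_pow_even, prod_ratio]
  ring

lemma phase_shift (a b c : ℝ) (n : ℕ) :
    ∫ x in (0:ℝ)..(2*π), (a + b * cos x + c * sin x)^n
    = ∫ x in (0:ℝ)..(2*π), (a + Real.sqrt (b^2+c^2) * cos x)^n := by
  set r := Real.sqrt (b^2+c^2) with hr
  by_cases hbc : b = 0 ∧ c = 0
  · obtain ⟨hb, hc⟩ := hbc
    simp [hb, hc, hr]
  · have hz : (⟨b, c⟩ : ℂ) ≠ 0 := by
      simp only [ne_eq, Complex.ext_iff, Complex.zero_re, Complex.zero_im]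
      tauto
    set ψ := Complex.arg ⟨b, c⟩ with hψ
    have habs : ‖(⟨b, c⟩ : ℂ)‖ = r := by
      rw [Complex.norm_def, Complex.normSq_mk, hr]
      norm_num [pow_two]
    have hcos : r * Real.cos ψ = b := by
      rw [hψ, Complex.cos_arg hz, habs]
      field_simp [habs ▸ (norm_ne_zero_iff.mpr hz)]
    have hsin : r * Real.sin ψ = c := by
      rw [hψ, Complex.sin_arg, habs]
      field_simp [habs ▸ (norm_ne_zero_iff.mpr hz)]
    have hpt : ∀ x : ℝ, a + b * cos x + c * sin x = a + r * cos (x - ψ) := by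
      intro x
      rw [Real.cos_sub, ← hcos, ← hsin]
      ring
    rw [intervalIntegral.integral_congr (g := fun x => (a + r * Real.cos (x - ψ))^n)
      (fun x _ => by rw [hpt x])]
    have hcomp := intervalIntegral.integral_comp_sub_right (a := (0:ℝ)) (b := 2*π)
      (fun x => (a + r * Real.cos x)^n) ψ
    rw [hcomp]
    have hper : Function.Periodic (fun x => (a + r * Real.cos x)^n) (2*π) := fun x => by
      simp [Real.cos_add_two_pi]
    have := hper.intervalIntegral_add_eq (-ψ) 0
    simp only [zero_add] at this
    rw [show (0:ℝ) - ψ = -ψ by ring, show 2*π - ψ = -ψ + 2*π by ring, this]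

lemma key_integral (a r : ℝ) (n : ℕ) :
    ∫ x in (0:ℝ)..(2*π), (a + r * cos x)^n
    = ∑ m ∈ Finset.range (n/2+1),
        (n.choose (2*m) : ℝ) * (((2*m).choose m : ℝ) / 4^m) * a^(n-2*m) * r^(2*m) * (2*π) := by
  have hexp : ∀ x : ℝ, (a + r * cos x)^n
      = ∑ k ∈ Finset.range (n+1), a^(n-k) * r^k * (n.choose k : ℝ) * cos x ^ k := by
    intro x
    rw [add_comm a (r * cos x), add_pow]
    congr 1; ext k
    ring
  rw [intervalIntegral.integral_congr (fun x _ => hexp x)]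
  rw [intervalIntegral.integral_finset_sum
    (fun k _ => (Continuous.intervalIntegrable (by fun_prop) _ _))]
  have hterm : ∀ k ∈ Finset.range (n+1),
      (∫ x in (0:ℝ)..(2*π), a^(n-k) * r^k * (n.choose k : ℝ) * cos x ^ k)
      = if Even k then (n.choose k : ℝ) * (((k).choose (k/2) : ℝ) / 4^(k/2)) * a^(n-k) * r^k * (2*π) else 0 := by
    intro k _
    rw [intervalIntegral.integral_const_mul]
    by_cases hk : Even k
    · obtain ⟨m, hm⟩ := hk
      have : k = 2*m := by omega
      subst this
      rw [integral_cos_pow_two_pi]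
      rw [if_pos (even_two_mul m)]
      have : 2*m/2 = m := by omega
      rw [this]
      ring
    · obtain ⟨m, hm⟩ := Nat.not_even_iff_odd.mp hk
      have : k = 2*m+1 := by omega
      subst this
      rw [integral_cos_odd_two_pi]
      rw [if_neg (by rw [Nat.even_iff]; omega)]
      ring
  rw [Finset.sum_congr rfl hterm]
  rw [Finset.sum_ite, Finset.sum_const_zero, add_zero]
  rw [show (Finset.range (n+1)).filter (fun k => Even k)
      = (Finset.range (n/2+1)).image (fun m => 2*m) by
    ext k
    simp only [Finset.mem_filter, Finset.mem_range, Finset.mem_image, Nat.even_iff]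
    constructor
    · rintro ⟨h1, h2⟩; exact ⟨k/2, by omega, by omega⟩
    · rintro ⟨m, h1, rfl⟩; omega]
  rw [Finset.sum_image (fun a _ b _ h => by omega)]
  apply Finset.sum_congr rfl
  intro m _
  have : 2*m/2 = m := by omega
  rw [this]

lemma norm_vpr_sq (Ifun Jfun : V3 → V3) (hF : IsFrame Ifun Jfun) (v w : V3) (θ φ : ℝ) :
    ‖vpr Ifun Jfun v w θ φ‖^2
    = (((1 + Real.cos θ)/2) * ‖v‖^2 + ((1 - Real.cos θ)/2) * ‖w‖^2)
      + (Real.sin θ * (inner ℝ v (Ifun (v-w)) : ℝ)) * Real.cos φ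
      + (Real.sin θ * (inner ℝ v (Jfun (v-w)) : ℝ)) * Real.sin φ := by
  by_cases h : v - w = 0
  · have hw : v = w := by rwa [sub_eq_zero] at h
    subst hw
    simp only [vpr, Gam, sub_self, hF.I_zero, hF.J_zero, smul_zero, add_zero, zero_add,
      sub_zero, inner_zero_right, mul_zero, zero_mul]
    ring
  · set X := v - w with hX
    set I := Ifun X with hI
    set J := Jfun X with hJ
    have hII : (inner ℝ I I : ℝ) = ‖X‖^2 := by
      rw [real_inner_self_eq_norm_sq, hF.norm_I X h]
    have hJJ : (inner ℝ J J : ℝ) = ‖X‖^2 := by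
      rw [real_inner_self_eq_norm_sq, hF.norm_J X h]
    have hXI : (inner ℝ X I : ℝ) = 0 := hF.inner_X_I X h
    have hXJ : (inner ℝ X J : ℝ) = 0 := hF.inner_X_J X h
    have hIJ : (inner ℝ I J : ℝ) = 0 := hF.inner_I_J X h
    have hXX : ‖X‖^2 = ‖v‖^2 - 2*(inner ℝ v w : ℝ) + ‖w‖^2 := by
      rw [← real_inner_self_eq_norm_sq, ← real_inner_self_eq_norm_sq,
        ← real_inner_self_eq_norm_sq, hX, inner_sub_left, inner_sub_right, inner_sub_right,
        real_inner_comm w v]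
      ring
    have hIX : (inner ℝ I X : ℝ) = 0 := by rw [real_inner_comm]; exact hXI
    have hJX : (inner ℝ J X : ℝ) = 0 := by rw [real_inner_comm]; exact hXJ
    have hJI : (inner ℝ J I : ℝ) = 0 := by rw [real_inner_comm]; exact hIJ
    have expand : ‖vpr Ifun Jfun v w θ φ‖^2
        = ‖v‖^2 - (1 - Real.cos θ) * (inner ℝ X v : ℝ)
          + ((1 - Real.cos θ)/2)^2 * ‖X‖^2
          + Real.sin θ * ((inner ℝ I v : ℝ) * Real.cos φ + (inner ℝ J v : ℝ) * Real.sin φ)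
          + (Real.sin θ / 2)^2 * (Real.cos φ^2 + Real.sin φ^2) * ‖X‖^2 := by
      rw [vpr, Gam, ← hX, ← hI, ← hJ, ← real_inner_self_eq_norm_sq]
      simp only [inner_add_left, inner_add_right, inner_sub_left, inner_sub_right,
        real_inner_smul_left, real_inner_smul_right]
      rw [real_inner_comm v X, real_inner_comm v I, real_inner_comm v J, real_inner_comm I J]
      simp only [hII, hJJ, hXI, hXJ, hIJ, hIX, hJX, hJI]
      rw [real_inner_self_eq_norm_sq X, real_inner_self_eq_norm_sq v]
      ring
    rw [expand]
    have hvX : (inner ℝ X v : ℝ) = ‖v‖^2 - (inner ℝ v w : ℝ) := by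
      rw [real_inner_comm, hX, inner_sub_right, real_inner_self_eq_norm_sq]
    have htrig : Real.cos φ^2 + Real.sin φ^2 = 1 := by
      rw [add_comm]; exact Real.sin_sq_add_cos_sq φ
    have hIv : (inner ℝ I v : ℝ) = inner ℝ v I := real_inner_comm _ _
    have hJv : (inner ℝ J v : ℝ) = inner ℝ v J := real_inner_comm _ _
    rw [htrig, hvX, hXX, hIv, hJv]
    linear_combination ((‖v‖^2 - 2*(inner ℝ v w : ℝ) + ‖w‖^2)/4) * (Real.sin_sq_add_cos_sq θ)

lemma bc_sq (Ifun Jfun : V3 → V3) (hF : IsFrame Ifun Jfun) (v w : V3) (θ : ℝ) :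
    (Real.sin θ * (inner ℝ v (Ifun (v-w)) : ℝ))^2 + (Real.sin θ * (inner ℝ v (Jfun (v-w)) : ℝ))^2
    = Real.sin θ^2 * (‖v‖^2 * ‖w‖^2 - (inner ℝ v w : ℝ)^2) := by
  by_cases h : v - w = 0
  · have hw : v = w := by rwa [sub_eq_zero] at h
    subst hw
    simp only [sub_self, hF.I_zero, hF.J_zero, inner_zero_right, mul_zero]
    rw [real_inner_self_eq_norm_sq]
    ring
  · set X := v - w with hX
    have hp := parseval3 X (Ifun X) (Jfun X) h (hF.norm_I X h) (hF.norm_J X h)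
      (hF.inner_X_I X h) (hF.inner_X_J X h) (hF.inner_I_J X h) v
    have hvX : (inner ℝ v X : ℝ) = ‖v‖^2 - (inner ℝ v w : ℝ) := by
      rw [hX, inner_sub_right, real_inner_self_eq_norm_sq]
    have hXX : ‖X‖^2 = ‖v‖^2 - 2*(inner ℝ v w : ℝ) + ‖w‖^2 := by
      rw [← real_inner_self_eq_norm_sq, ← real_inner_self_eq_norm_sq,
        ← real_inner_self_eq_norm_sq, hX, inner_sub_left, inner_sub_right, inner_sub_right,
        real_inner_comm w v]
      ring
    rw [hvX, hXX] at hp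
    nlinarith [hp]

lemma coef_id (n m i j : ℕ) (h2m : 2*m ≤ n) (hij : i + j = n - 2*m) :
    (n.choose (2*m) : ℝ) * ((2*m).choose m : ℝ) * ((n-2*m).choose i : ℝ)
    = (n.factorial : ℝ) / ((i.factorial * j.factorial * (m.factorial)^2 : ℕ) : ℝ) := by
  have h1 := Nat.choose_mul_factorial_mul_factorial h2m
  have h2 := Nat.choose_mul_factorial_mul_factorial (show m ≤ 2*m by omega)
  have h3 := Nat.choose_mul_factorial_mul_factorial (show i ≤ n - 2*m by omega)
  rw [show 2*m - m = m by omega] at h2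
  rw [show n - 2*m - i = j by omega] at h3
  have c1 : (n.choose (2*m) : ℝ) * ((2*m).factorial : ℝ) * ((n-2*m).factorial : ℝ)
      = (n.factorial : ℝ) := by exact_mod_cast congrArg (fun x : ℕ => (x:ℝ)) h1
  have c2 : ((2*m).choose m : ℝ) * (m.factorial : ℝ) * (m.factorial : ℝ)
      = ((2*m).factorial : ℝ) := by exact_mod_cast congrArg (fun x : ℕ => (x:ℝ)) h2
  have c3 : ((n-2*m).choose i : ℝ) * (i.factorial : ℝ) * (j.factorial : ℝ)
      = ((n-2*m).factorial : ℝ) := by exact_mod_cast congrArg (fun x : ℕ => (x:ℝ)) h3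
  rw [← c2, ← c3] at c1
  have hfne : ((i.factorial * j.factorial * (m.factorial)^2 : ℕ) : ℝ) ≠ 0 := by
    positivity
  rw [eq_div_iff hfne]
  push_cast
  linear_combination c1
lemma sum_transform (n : ℕ) (hn : 2 ≤ n) (A B s P Q D : ℝ) :
    ∑ m ∈ Finset.range (n/2+1), (n.choose (2*m) : ℝ) * (((2*m).choose m : ℝ) / 4^m)
        * (A * P^2 + B * Q^2)^(n-2*m) * (s^2*D)^m
    = A ^ n * P ^ (2*n) + B ^ n * Q ^ (2*n)
      + ∑ i ∈ Finset.range n, ∑ j ∈ Finset.range n,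
          (if i + j ≤ n ∧ Even (n - i - j) then
            ((n.factorial : ℝ)
              / ((i.factorial * j.factorial * ((n-i-j)/2).factorial ^ 2 : ℕ) : ℝ))
            * A ^ i * B ^ j * (s/2) ^ (n-i-j) * P ^ (2*i) * Q ^ (2*j) * D ^ ((n-i-j)/2)
          else 0) := by
  set g : ℕ → ℕ → ℝ := fun i j =>
    if i + j ≤ n ∧ Even (n - i - j) then
      ((n.factorial : ℝ) / ((i.factorial * j.factorial * ((n-i-j)/2).factorial ^ 2 : ℕ) : ℝ))
      * A ^ i * B ^ j * (s/2) ^ (n-i-j) * P ^ (2*i) * Q ^ (2*j) * D ^ ((n-i-j)/2)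
    else 0 with hg
  have hfne : ∀ k : ℕ, ((k.factorial : ℕ) : ℝ) ≠ 0 := fun k => by
    exact_mod_cast k.factorial_ne_zero
  -- Claim 1
  have claim1 : ∑ m ∈ Finset.range (n/2+1), (n.choose (2*m) : ℝ) * (((2*m).choose m : ℝ) / 4^m)
        * (A * P^2 + B * Q^2)^(n-2*m) * (s^2*D)^m
      = ∑ i ∈ Finset.range (n+1), ∑ j ∈ Finset.range (n+1), g i j := by
    have hstep : ∀ m ∈ Finset.range (n/2+1),
        (n.choose (2*m) : ℝ) * (((2*m).choose m : ℝ) / 4^m)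
          * (A * P^2 + B * Q^2)^(n-2*m) * (s^2*D)^m
        = ∑ i ∈ Finset.range (n-2*m+1), g i (n-2*m-i) := by
      intro m hm
      rw [Finset.mem_range] at hm
      have h2m : 2*m ≤ n := by omega
      rw [add_pow, Finset.mul_sum, Finset.sum_mul]
      apply Finset.sum_congr rfl
      intro i hi
      rw [Finset.mem_range] at hi
      have hij : i + (n - 2*m - i) = n - 2*m := by omega
      have hk : n - i - (n - 2*m - i) = 2*m := by omega
      have hcond : i + (n - 2*m - i) ≤ n ∧ Even (n - i - (n - 2*m - i)) :=
        ⟨by omega, by rw [hk]; exact even_two_mul m⟩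
      simp only [hg]
      rw [if_pos hcond, hk]
      rw [show 2*m/2 = m by omega]
      have hcoef := coef_id n m i (n - 2*m - i) h2m hij
      have e1 : (A * P^2)^i = A^i * P^(2*i) := by rw [mul_pow, ← pow_mul]
      have e2 : (B * Q^2)^(n-2*m-i) = B^(n-2*m-i) * Q^(2*(n-2*m-i)) := by
        rw [mul_pow, ← pow_mul]
      have e3 : (s/2)^(2*m) = s^(2*m) / 4^m := by
        rw [div_pow, pow_mul s 2, pow_mul 2]
        norm_num
      have e4 : (s^2*D)^m = s^(2*m) * D^m := by rw [mul_pow, ← pow_mul]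
      rw [e1, e2, e3, e4, ← hcoef]
      ring
    rw [Finset.sum_congr rfl hstep]
    rw [Finset.sum_sigma' (Finset.range (n/2+1)) (fun m => Finset.range (n-2*m+1))
      (fun m i => g i (n-2*m-i))]
    have hbij : ∑ x ∈ (Finset.range (n/2+1)).sigma (fun m => Finset.range (n-2*m+1)),
          g x.2 (n-2*x.1-x.2)
        = ∑ p ∈ (Finset.range (n+1) ×ˢ Finset.range (n+1)).filter
            (fun p => p.1 + p.2 ≤ n ∧ Even (n - p.1 - p.2)), g p.1 p.2 := by
      apply Finset.sum_nbij' (fun x => (x.2, n - 2*x.1 - x.2))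
        (fun p => ⟨(n - p.1 - p.2)/2, p.1⟩)
      · rintro ⟨m, i⟩ hx
        simp only [Finset.mem_sigma, Finset.mem_range] at hx
        simp only [Finset.mem_filter, Finset.mem_product, Finset.mem_range]
        refine ⟨⟨by omega, by omega⟩, by omega, ?_⟩
        rw [show n - i - (n - 2*m - i) = 2*m by omega]
        exact even_two_mul m
      · rintro ⟨i, j⟩ hp
        simp only [Finset.mem_filter, Finset.mem_product, Finset.mem_range] at hp
        obtain ⟨⟨hi, hj⟩, hle, hev⟩ := hp
        obtain ⟨t, ht⟩ := hev
        simp only [Finset.mem_sigma, Finset.mem_range]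
        omega
      · rintro ⟨m, i⟩ hx
        simp only [Finset.mem_sigma, Finset.mem_range] at hx
        have h1 : (n - i - (n - 2*m - i))/2 = m := by omega
        simp only [h1]
      · rintro ⟨i, j⟩ hp
        simp only [Finset.mem_filter, Finset.mem_product, Finset.mem_range] at hp
        obtain ⟨⟨hi, hj⟩, hle, hev⟩ := hp
        obtain ⟨t, ht⟩ := hev
        have h1 : n - 2*((n - i - j)/2) - i = j := by omega
        simp only [h1]
      · rintro ⟨m, i⟩ _
        rfl
    rw [hbij]
    have hfull : ∑ p ∈ (Finset.range (n+1) ×ˢ Finset.range (n+1)).filter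
          (fun p => p.1 + p.2 ≤ n ∧ Even (n - p.1 - p.2)), g p.1 p.2
        = ∑ p ∈ Finset.range (n+1) ×ˢ Finset.range (n+1), g p.1 p.2 := by
      rw [Finset.sum_filter]
      apply Finset.sum_congr rfl
      intro p _
      by_cases hc : p.1 + p.2 ≤ n ∧ Even (n - p.1 - p.2)
      · rw [if_pos hc]
      · rw [if_neg hc]
        simp only [hg]
        rw [if_neg hc]
    rw [hfull, Finset.sum_product']
  rw [claim1]
  -- Claim 2: peel off the boundary terms
  have hB : g 0 n = B ^ n * Q ^ (2*n) := by
    simp only [hg]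
    rw [if_pos ⟨by omega, by rw [show n - 0 - n = 0 by omega]; exact Even.zero⟩]
    rw [show n - 0 - n = 0 by omega]
    simp [Nat.factorial_zero, hfne n]
  have hA : g n 0 = A ^ n * P ^ (2*n) := by
    simp only [hg]
    rw [if_pos ⟨by omega, by rw [show n - n - 0 = 0 by omega]; exact Even.zero⟩]
    rw [show n - n - 0 = 0 by omega]
    simp [Nat.factorial_zero, hfne n]
  have hrow : ∑ i ∈ Finset.range n, g i n = g 0 n := by
    apply Finset.sum_eq_single_of_mem 0 (Finset.mem_range.mpr (by omega))
    intro b _ hb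
    simp only [hg]
    rw [if_neg]
    rintro ⟨h1, _⟩
    omega
  have hcol : ∑ j ∈ Finset.range (n+1), g n j = g n 0 := by
    apply Finset.sum_eq_single_of_mem 0 (Finset.mem_range.mpr (by omega))
    intro b _ hb
    simp only [hg]
    rw [if_neg]
    rintro ⟨h1, _⟩
    omega
  rw [Finset.sum_range_succ]
  have hinner : ∀ i ∈ Finset.range n,
      ∑ j ∈ Finset.range (n+1), g i j = (∑ j ∈ Finset.range n, g i j) + g i n := by
    intro i _
    rw [Finset.sum_range_succ]
  rw [Finset.sum_congr rfl hinner, Finset.sum_add_distrib, hrow, hcol, hB, hA]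
  ring

/-- The `φ`-average `Θ_n(v,v⁎,θ) = (1/2π) ∫₀^{2π} |v'|^{2n} dφ` equals
`((1+cosθ)/2)^n |v|^{2n} + ((1-cosθ)/2)^n |v⁎|^{2n} + Λ_n(v,v⁎,θ)`, where `Λ_n` is the sum
over triples `(i,j,k)` with `i+j+k = n`, `i ≤ n-1`, `j ≤ n-1`, `k` even, of
`(n!/(i!j!((k/2)!)²)) ((1+cosθ)/2)^i ((1-cosθ)/2)^j ((sinθ)/2)^k |v|^{2i} |v⁎|^{2j}
(|v|²|v⁎|² - (v·v⁎)²)^{k/2}`. -/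
theorem phi_average_formula
    (Ifun Jfun : V3 → V3) (hF : IsFrame Ifun Jfun)
    (n : ℕ) (hn : 2 ≤ n) (v w : V3) (θ : ℝ) (hθ : θ ∈ Ioc (0:ℝ) π) :
    (1 / (2 * π)) * ∫ φ in Ico (0:ℝ) (2 * π), ‖vpr Ifun Jfun v w θ φ‖ ^ (2 * n)
    = ((1 + Real.cos θ) / 2) ^ n * ‖v‖ ^ (2 * n)
      + ((1 - Real.cos θ) / 2) ^ n * ‖w‖ ^ (2 * n)
      + ∑ i ∈ Finset.range n, ∑ j ∈ Finset.range n,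
          (if i + j ≤ n ∧ Even (n - i - j) then
            ((n.factorial : ℝ)
              / ((i.factorial * j.factorial * ((n - i - j) / 2).factorial ^ 2 : ℕ) : ℝ))
            * ((1 + Real.cos θ) / 2) ^ i * ((1 - Real.cos θ) / 2) ^ j
            * (Real.sin θ / 2) ^ (n - i - j)
            * ‖v‖ ^ (2 * i) * ‖w‖ ^ (2 * j)
            * (‖v‖ ^ 2 * ‖w‖ ^ 2 - (inner ℝ v w : ℝ) ^ 2) ^ ((n - i - j) / 2)
          else 0) := by
  have hbc := bc_sq Ifun Jfun hF v w θ
  have hπ : (0:ℝ) < 2 * π := by positivity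
  have h0 : (∫ φ in Ico (0:ℝ) (2 * π), ‖vpr Ifun Jfun v w θ φ‖ ^ (2 * n))
      = ∫ x in (0:ℝ)..(2*π),
          ((((1 + Real.cos θ)/2) * ‖v‖^2 + ((1 - Real.cos θ)/2) * ‖w‖^2)
            + (Real.sin θ * (inner ℝ v (Ifun (v-w)) : ℝ)) * Real.cos x
            + (Real.sin θ * (inner ℝ v (Jfun (v-w)) : ℝ)) * Real.sin x)^n := by
    rw [intervalIntegral.integral_of_le hπ.le, integral_Ioc_eq_integral_Ioo,
        ← integral_Ico_eq_integral_Ioo]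
    apply MeasureTheory.integral_congr_ae
    filter_upwards with φ
    rw [pow_mul, norm_vpr_sq Ifun Jfun hF v w θ φ]
  rw [h0, phase_shift, key_integral, Finset.mul_sum]
  have hterm : ∀ m ∈ Finset.range (n/2+1),
      1 / (2*π) * ((n.choose (2*m) : ℝ) * (((2*m).choose m : ℝ) / 4^m)
        * (((1 + Real.cos θ)/2) * ‖v‖^2 + ((1 - Real.cos θ)/2) * ‖w‖^2)^(n-2*m)
        * Real.sqrt ((Real.sin θ * (inner ℝ v (Ifun (v-w)) : ℝ))^2
            + (Real.sin θ * (inner ℝ v (Jfun (v-w)) : ℝ))^2) ^ (2*m) * (2*π))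
      = (n.choose (2*m) : ℝ) * (((2*m).choose m : ℝ) / 4^m)
        * (((1 + Real.cos θ)/2) * ‖v‖^2 + ((1 - Real.cos θ)/2) * ‖w‖^2)^(n-2*m)
        * ((Real.sin θ)^2 * (‖v‖^2 * ‖w‖^2 - (inner ℝ v w : ℝ)^2))^m := by
    intro m _
    have hr : Real.sqrt ((Real.sin θ * (inner ℝ v (Ifun (v-w)) : ℝ))^2
          + (Real.sin θ * (inner ℝ v (Jfun (v-w)) : ℝ))^2) ^ (2*m)
        = ((Real.sin θ)^2 * (‖v‖^2 * ‖w‖^2 - (inner ℝ v w : ℝ)^2))^m := by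
      rw [pow_mul, Real.sq_sqrt (by positivity), hbc]
    rw [hr]
    have hpne : (2*π : ℝ) ≠ 0 := hπ.ne'
    field_simp
  rw [Finset.sum_congr rfl hterm, sum_transform n hn]
end
end

section
/- For all v, v* ∈ ℝ³ and every k ∈ ℕ, (1/(2π)) ∫₀^{2π} (v · Γ(v−v*,φ))^k dφ = 0 if k is odd, and equals (k!/(2^k ((k/2)!)²)) (|v|²|v*|² − (v·v*)²)^{k/2} if k is even. -/
open MeasureTheory Real Set

noncomputable section

namespace WallisAux

open intervalIntegral

lemma prod_half (n : ℕ) : (∏ i ∈ Finset.range n, (2 * (i:ℝ) + 1) / (2 * i + 2))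
    = ((2*n).factorial : ℝ) / (4 ^ n * (n.factorial : ℝ)^2) := by
  induction n with
  | zero => simp
  | succ k ih =>
    rw [Finset.prod_range_succ, ih]
    have h1 : 2*(k+1) = (2*k+1) + 1 := by ring
    rw [h1]
    simp only [Nat.factorial_succ]
    have hk : (k.factorial : ℝ) ≠ 0 := Nat.cast_ne_zero.2 k.factorial_ne_zero
    push_cast
    field_simp
    ring

lemma sinper (k : ℕ) : Function.Periodic (fun x => Real.sin x ^ k) (2 * π) := by
  intro x; simp [Real.sin_periodic x]

lemma cos_to_sin (k : ℕ) :
    (∫ x in (0:ℝ)..(2*π), Real.cos x ^ k) = ∫ x in (0:ℝ)..(2*π), Real.sin x ^ k := by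
  calc (∫ x in (0:ℝ)..(2*π), Real.cos x ^ k)
      = ∫ x in (0:ℝ)..(2*π), Real.sin (x + π/2) ^ k := by
        simp [Real.sin_add_pi_div_two]
    _ = ∫ x in (0+π/2)..(2*π+π/2), Real.sin x ^ k :=
        intervalIntegral.integral_comp_add_right (fun y => Real.sin y ^ k) (π/2)
    _ = ∫ x in (π/2)..(π/2+2*π), Real.sin x ^ k := by congr 1 <;> ring
    _ = ∫ x in (0:ℝ)..(0+2*π), Real.sin x ^ k := (sinper k).intervalIntegral_add_eq (π/2) 0
    _ = ∫ x in (0:ℝ)..(2*π), Real.sin x ^ k := by rw [zero_add]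

lemma sin_back (k : ℕ) :
    (∫ x in π..(2*π), Real.sin x ^ k) = (-1)^k * ∫ x in (0:ℝ)..π, Real.sin x ^ k := by
  calc (∫ x in π..(2*π), Real.sin x ^ k)
      = ∫ x in (0+π)..(π+π), Real.sin x ^ k := by congr 1 <;> ring
    _ = ∫ x in (0:ℝ)..π, Real.sin (x + π) ^ k :=
        (intervalIntegral.integral_comp_add_right (fun y => Real.sin y ^ k) π).symm
    _ = ∫ x in (0:ℝ)..π, (-1)^k * Real.sin x ^ k := by
        congr 1; ext x; rw [Real.sin_add_pi]; ring
    _ = (-1)^k * ∫ x in (0:ℝ)..π, Real.sin x ^ k := intervalIntegral.integral_const_mul _ _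

lemma my_sin_two_pi (k : ℕ) :
    (∫ x in (0:ℝ)..(2*π), Real.sin x ^ k)
      = (1 + (-1)^k) * ∫ x in (0:ℝ)..π, Real.sin x ^ k := by
  have hi : ∀ a b : ℝ, IntervalIntegrable (fun x => Real.sin x ^ k) volume a b :=
    fun a b => (Continuous.intervalIntegrable (by fun_prop) a b)
  rw [← intervalIntegral.integral_add_adjacent_intervals (hi 0 π) (hi π (2*π)), sin_back]
  ring

lemma cos_pow_two_pi_odd (n : ℕ) :
    (∫ x in (0:ℝ)..(2*π), Real.cos x ^ (2*n+1)) = 0 := by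
  rw [cos_to_sin, my_sin_two_pi]
  simp [pow_succ, pow_mul]

lemma cos_pow_two_pi_even (n : ℕ) :
    (∫ x in (0:ℝ)..(2*π), Real.cos x ^ (2*n))
      = 2 * π * (((2*n).factorial : ℝ) / (4 ^ n * (n.factorial : ℝ)^2)) := by
  rw [cos_to_sin, my_sin_two_pi, integral_sin_pow_even, prod_half, pow_mul]
  norm_num
  ring

lemma phase (a b : ℝ) : ∃ φ₀ : ℝ, ∀ φ : ℝ,
    a * Real.cos φ + b * Real.sin φ = Real.sqrt (a^2 + b^2) * Real.cos (φ - φ₀) := by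
  by_cases h : a = 0 ∧ b = 0
  · exact ⟨0, fun φ => by simp [h.1, h.2]⟩
  · set z : ℂ := ⟨a, b⟩ with hz
    have hz0 : z ≠ 0 := by
      intro h0
      apply h
      rw [Complex.ext_iff] at h0
      exact ⟨h0.1, h0.2⟩
    have habs : ‖z‖ = Real.sqrt (a^2 + b^2) := by
      rw [Complex.norm_def, Complex.normSq_apply]
      norm_num [hz, sq]
    have hs : Real.sqrt (a^2 + b^2) ≠ 0 := by
      rw [← habs]; simpa using hz0
    refine ⟨z.arg, fun φ => ?_⟩
    rw [Real.cos_sub, Complex.cos_arg hz0, Complex.sin_arg, habs]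
    have hre : z.re = a := rfl
    have him : z.im = b := rfl
    rw [hre, him]
    field_simp

lemma intred (a b : ℝ) (k : ℕ) :
    (∫ φ in Ico (0:ℝ) (2*π), (a * Real.cos φ + b * Real.sin φ)^k)
      = (Real.sqrt (a^2+b^2))^k * ∫ x in (0:ℝ)..(2*π), Real.cos x ^ k := by
  obtain ⟨φ₀, hφ⟩ := phase a b
  have h2 : (0:ℝ) ≤ 2*π := by positivity
  have cper : Function.Periodic (fun x => Real.cos x ^ k) (2 * π) := by
    intro x; simp [Real.cos_periodic x]
  calc (∫ φ in Ico (0:ℝ) (2*π), (a * Real.cos φ + b * Real.sin φ)^k)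
      = ∫ φ in Ioc (0:ℝ) (2*π), (a * Real.cos φ + b * Real.sin φ)^k := by
        rw [integral_Ico_eq_integral_Ioo, integral_Ioc_eq_integral_Ioo]
    _ = ∫ φ in (0:ℝ)..(2*π), (a * Real.cos φ + b * Real.sin φ)^k := by
        rw [intervalIntegral.integral_of_le h2]
    _ = ∫ φ in (0:ℝ)..(2*π), (Real.sqrt (a^2+b^2))^k * Real.cos (φ - φ₀) ^ k := by
        congr 1; ext φ; rw [hφ φ]; ring
    _ = (Real.sqrt (a^2+b^2))^k * ∫ φ in (0:ℝ)..(2*π), (fun x => Real.cos x ^ k) (φ - φ₀) :=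
        intervalIntegral.integral_const_mul _ _
    _ = (Real.sqrt (a^2+b^2))^k * ∫ x in (0-φ₀)..(2*π-φ₀), Real.cos x ^ k := by
        rw [intervalIntegral.integral_comp_sub_right (fun x => Real.cos x ^ k) φ₀]
    _ = (Real.sqrt (a^2+b^2))^k * ∫ x in (-φ₀)..(-φ₀+2*π), Real.cos x ^ k := by
        congr 1 <;> ring
    _ = (Real.sqrt (a^2+b^2))^k * ∫ x in (0:ℝ)..(0+2*π), Real.cos x ^ k := by
        rw [cper.intervalIntegral_add_eq (-φ₀) 0]
    _ = (Real.sqrt (a^2+b^2))^k * ∫ x in (0:ℝ)..(2*π), Real.cos x ^ k := by rw [zero_add]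

end WallisAux

lemma geom_ab (Ifun Jfun : V3 → V3) (hF : IsFrame Ifun Jfun) (v w : V3) :
    (inner ℝ v (Ifun (v-w)) : ℝ)^2 + (inner ℝ v (Jfun (v-w)) : ℝ)^2
      = ‖v‖^2 * ‖w‖^2 - (inner ℝ v w : ℝ)^2 := by
  set X : V3 := v - w with hX
  by_cases hX0 : X = 0
  · have hvw : v = w := by rwa [hX, sub_eq_zero] at hX0
    rw [hX0, hF.I_zero, hF.J_zero, inner_zero_right]
    have h1 : (inner ℝ v w : ℝ) = ‖w‖^2 := by rw [hvw, real_inner_self_eq_norm_sq]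
    rw [h1, hvw]
    ring
  · have hnX : ‖X‖ ≠ 0 := norm_ne_zero_iff.2 hX0
    set e : Fin 3 → V3 := ![‖X‖⁻¹ • X, ‖X‖⁻¹ • Ifun X, ‖X‖⁻¹ • Jfun X] with he
    have hon : Orthonormal ℝ e := by
      rw [orthonormal_iff_ite]
      intro i j
      have hIX := hF.inner_X_I X hX0
      have hJX := hF.inner_X_J X hX0
      have hIJ := hF.inner_I_J X hX0
      have hI := hF.norm_I X hX0
      have hJ := hF.norm_J X hX0
      have hXX : (inner ℝ X X : ℝ) = ‖X‖^2 := real_inner_self_eq_norm_sq X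
      have hII : (inner ℝ (Ifun X) (Ifun X) : ℝ) = ‖X‖^2 := by
        rw [real_inner_self_eq_norm_sq, hI]
      have hJJ : (inner ℝ (Jfun X) (Jfun X) : ℝ) = ‖X‖^2 := by
        rw [real_inner_self_eq_norm_sq, hJ]
      have hXI' : (inner ℝ (Ifun X) X : ℝ) = 0 := by rw [real_inner_comm]; exact hIX
      have hXJ' : (inner ℝ (Jfun X) X : ℝ) = 0 := by rw [real_inner_comm]; exact hJX
      have hJI' : (inner ℝ (Jfun X) (Ifun X) : ℝ) = 0 := by rw [real_inner_comm]; exact hIJ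
      fin_cases i <;> fin_cases j <;>
        simp only [he, Matrix.cons_val_zero, Matrix.cons_val_one, Matrix.head_cons,
          Matrix.cons_val_two, Matrix.tail_cons, real_inner_smul_left,
          real_inner_smul_right, hXX, hII, hJJ, hIX, hJX, hIJ, hXI', hXJ', hJI',
          Fin.zero_eta, Fin.mk_one, Fin.reduceFinMk, Fin.isValue] <;>
        first
          | (rw [if_pos trivial]; field_simp; try ring)
          | (rw [if_neg (by decide)]; ring)
    have hsp : ⊤ ≤ Submodule.span ℝ (Set.range e) := by
      have hcard : Fintype.card (Fin 3) = Module.finrank ℝ V3 := by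
        simp [finrank_euclideanSpace_fin]
      exact ge_of_eq (LinearIndependent.span_eq_top_of_card_eq_finrank
        hon.linearIndependent hcard)
    set B : OrthonormalBasis (Fin 3) ℝ V3 := OrthonormalBasis.mk hon hsp with hB
    have hpar := B.sum_inner_mul_inner v v
    have hcoe : ∀ i, B i = e i := fun i => by rw [hB, OrthonormalBasis.coe_mk]
    rw [Fin.sum_univ_three, hcoe 0, hcoe 1, hcoe 2] at hpar
    simp only [he, Matrix.cons_val_zero, Matrix.cons_val_one, Matrix.head_cons,
      Matrix.cons_val_two, Matrix.tail_cons, real_inner_smul_right, real_inner_smul_left] at hpar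
    have hvv : (inner ℝ v v : ℝ) = ‖v‖^2 := real_inner_self_eq_norm_sq v
    have hcomm1 : (inner ℝ X v : ℝ) = inner ℝ v X := real_inner_comm v X
    have hcomm2 : (inner ℝ (Ifun X) v : ℝ) = inner ℝ v (Ifun X) := real_inner_comm v (Ifun X)
    have hcomm3 : (inner ℝ (Jfun X) v : ℝ) = inner ℝ v (Jfun X) := real_inner_comm v (Jfun X)
    rw [hvv, hcomm1, hcomm2, hcomm3] at hpar
    have hkey : (inner ℝ v (Ifun X) : ℝ)^2 + (inner ℝ v (Jfun X) : ℝ)^2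
        = ‖v‖^2 * ‖X‖^2 - (inner ℝ v X : ℝ)^2 := by
      have h2 : ((inner ℝ v X : ℝ)^2 + (inner ℝ v (Ifun X) : ℝ)^2 + (inner ℝ v (Jfun X) : ℝ)^2)
          * (‖X‖⁻¹)^2 = ‖v‖^2 := by rw [← hpar]; ring
      have h3 : (‖X‖⁻¹)^2 * ‖X‖^2 = 1 := by field_simp
      calc (inner ℝ v (Ifun X) : ℝ)^2 + (inner ℝ v (Jfun X) : ℝ)^2
          = ((inner ℝ v X : ℝ)^2 + (inner ℝ v (Ifun X) : ℝ)^2 + (inner ℝ v (Jfun X) : ℝ)^2)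
              * ((‖X‖⁻¹)^2 * ‖X‖^2) - (inner ℝ v X : ℝ)^2 := by rw [h3]; ring
        _ = (((inner ℝ v X : ℝ)^2 + (inner ℝ v (Ifun X) : ℝ)^2 + (inner ℝ v (Jfun X) : ℝ)^2)
              * (‖X‖⁻¹)^2) * ‖X‖^2 - (inner ℝ v X : ℝ)^2 := by ring
        _ = ‖v‖^2 * ‖X‖^2 - (inner ℝ v X : ℝ)^2 := by rw [h2]
    rw [hkey, hX]
    have hvX : (inner ℝ v (v - w) : ℝ) = ‖v‖^2 - inner ℝ v w := by
      rw [inner_sub_right, real_inner_self_eq_norm_sq]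
    have hnvw : ‖v - w‖^2 = ‖v‖^2 - 2 * inner ℝ v w + ‖w‖^2 := by
      rw [norm_sub_sq_real]
    rw [hvX, hnvw]
    ring



/-- Wallis-type computation: for all `v, v⁎ ∈ ℝ³` and `k ∈ ℕ`,
`(1/2π) ∫₀^{2π} (v · Γ(v-v⁎,φ))^k dφ` is `0` if `k` is odd, and equals
`(k!/(2^k ((k/2)!)²)) (|v|²|v⁎|² - (v·v⁎)²)^{k/2}` if `k` is even. -/
theorem wallis_phi_average
    (Ifun Jfun : V3 → V3) (hF : IsFrame Ifun Jfun) (v w : V3) (k : ℕ) :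
    (Odd k →
      (1 / (2 * π)) * ∫ φ in Ico (0:ℝ) (2 * π),
        (inner ℝ v (Gam Ifun Jfun (v - w) φ) : ℝ) ^ k = 0)
    ∧ (Even k →
      (1 / (2 * π)) * ∫ φ in Ico (0:ℝ) (2 * π),
        (inner ℝ v (Gam Ifun Jfun (v - w) φ) : ℝ) ^ k
      = ((k.factorial : ℝ) / ((2 ^ k * (k / 2).factorial ^ 2 : ℕ) : ℝ))
        * (‖v‖ ^ 2 * ‖w‖ ^ 2 - (inner ℝ v w : ℝ) ^ 2) ^ (k / 2))  := by
  set X : V3 := v - w with hX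
  set a : ℝ := inner ℝ v (Ifun X) with ha
  set b : ℝ := inner ℝ v (Jfun X) with hb
  have hpt : ∀ φ : ℝ, (inner ℝ v (Gam Ifun Jfun X φ) : ℝ) = a * Real.cos φ + b * Real.sin φ := by
    intro φ
    simp only [Gam, inner_add_right, real_inner_smul_right, ha, hb]
    ring
  have hint : (∫ φ in Ico (0:ℝ) (2*π), (inner ℝ v (Gam Ifun Jfun X φ) : ℝ) ^ k)
      = (Real.sqrt (a^2+b^2))^k * ∫ x in (0:ℝ)..(2*π), Real.cos x ^ k := by
    rw [← WallisAux.intred a b k]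
    congr 1
    ext φ
    rw [hpt φ]
  constructor
  · rintro ⟨n, hn⟩
    have hk : k = 2*n + 1 := by omega
    rw [hint, hk, WallisAux.cos_pow_two_pi_odd]
    ring
  · rintro ⟨n, hn⟩
    have hk : k = 2*n := by omega
    subst hk
    rw [hint, WallisAux.cos_pow_two_pi_even]
    have hsq : (Real.sqrt (a^2+b^2))^(2*n) = (a^2+b^2)^n := by
      rw [pow_mul, Real.sq_sqrt (by positivity)]
    have hdiv : (2*n)/2 = n := by omega
    have hγ : a^2 + b^2 = ‖v‖^2 * ‖w‖^2 - (inner ℝ v w : ℝ)^2 :=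
      geom_ab Ifun Jfun hF v w
    rw [hsq, hdiv, hγ]
    have hπ : (2:ℝ) * π ≠ 0 := by positivity
    have hcast : (((2:ℕ) ^ (2*n) * (n.factorial) ^ 2 : ℕ) : ℝ)
        = 4 ^ n * (n.factorial : ℝ)^2 := by
      push_cast
      rw [pow_mul]
      norm_num
    rw [hcast]
    field_simp
end
end

section
/- Assume H₂(ν) for some ν ∈ (0,2). There is a constant ζ₁ ∈ (0,∞), depending only on ν, κ₁, κ₂ (one may take ζ₁ = κ₁/(20(2−ν))), such that for every integer n ≥ 2, a_n := ∫₀^π (1 − ((1+cos θ)/2)^n − ((1−cos θ)/2)^n) β(θ) dθ ≥ ζ₁ n^{ν/2}. -/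
open MeasureTheory Real Set

noncomputable section

private lemma aux_nonneg (n : ℕ) (hn : 1 ≤ n) (θ : ℝ) :
    0 ≤ 1 - ((1 + Real.cos θ) / 2) ^ n - ((1 - Real.cos θ) / 2) ^ n := by
  have h1 := Real.neg_one_le_cos θ
  have h2 := Real.cos_le_one θ
  have ha : ((1 + Real.cos θ) / 2) ^ n ≤ (1 + Real.cos θ) / 2 := by
    calc ((1 + Real.cos θ) / 2) ^ n ≤ ((1 + Real.cos θ) / 2) ^ 1 :=
          pow_le_pow_of_le_one (by linarith) (by linarith) hn
      _ = (1 + Real.cos θ) / 2 := pow_one _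
  have hb : ((1 - Real.cos θ) / 2) ^ n ≤ (1 - Real.cos θ) / 2 := by
    calc ((1 - Real.cos θ) / 2) ^ n ≤ ((1 - Real.cos θ) / 2) ^ 1 :=
          pow_le_pow_of_le_one (by linarith) (by linarith) hn
      _ = (1 - Real.cos θ) / 2 := pow_one _
  linarith

private lemma aux_upper (n : ℕ) (θ : ℝ) :
    1 - ((1 + Real.cos θ) / 2) ^ n - ((1 - Real.cos θ) / 2) ^ n ≤ n * θ ^ 2 / 4 := by
  have h1 := Real.neg_one_le_cos θ
  have h2 := Real.cos_le_one θ
  set b : ℝ := (1 - Real.cos θ) / 2 with hbdef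
  have hb0 : 0 ≤ b := by rw [hbdef]; linarith
  have hbern : 1 - (n : ℝ) * b ≤ (1 - b) ^ n := by
    have h := one_add_mul_le_pow (a := -b) (by linarith) n
    have he : (1 + -b) = 1 - b := by ring
    rw [he] at h
    linarith
  have hble : b ≤ θ ^ 2 / 4 := by
    have := Real.one_sub_sq_div_two_le_cos (x := θ)
    rw [hbdef]; linarith
  have hbn : 0 ≤ b ^ n := pow_nonneg hb0 n
  have ha : ((1 + Real.cos θ) / 2 : ℝ) = 1 - b := by rw [hbdef]; ring
  rw [ha]
  have hnn : (0:ℝ) ≤ (n : ℝ) := Nat.cast_nonneg n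
  nlinarith [mul_le_mul_of_nonneg_left hble hnn]

private lemma aux_lower (n : ℕ) (hn : 2 ≤ n) {θ : ℝ}
    (hθ1 : 2 / Real.sqrt n ≤ θ) (hθ2 : θ ≤ π / 2) :
    (12 - π ^ 2) / (4 * (π ^ 2 + 4)) ≤
      1 - ((1 + Real.cos θ) / 2) ^ n - ((1 - Real.cos θ) / 2) ^ n := by
  have hπ : (3:ℝ) < π := Real.pi_gt_three
  have hn2 : (2:ℝ) ≤ (n : ℝ) := by exact_mod_cast hn
  have hn0 : (0:ℝ) < (n : ℝ) := by linarith
  have hsq : 0 < Real.sqrt n := Real.sqrt_pos.2 hn0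
  have hθ0 : 0 < θ := lt_of_lt_of_le (by positivity) hθ1
  have hcos0 : 0 ≤ Real.cos θ := Real.cos_nonneg_of_mem_Icc ⟨by linarith, hθ2⟩
  have hcos1 : Real.cos θ ≤ 1 := Real.cos_le_one θ
  set b : ℝ := (1 - Real.cos θ) / 2 with hbdef
  have hb0 : 0 ≤ b := by rw [hbdef]; linarith
  have hbh : b ≤ 1 / 2 := by rw [hbdef]; linarith
  have hπ2 : (0:ℝ) < π ^ 2 := by positivity
  have habs : |θ| ≤ π := by rw [abs_of_pos hθ0]; linarith
  have hcosq := Real.cos_le_one_sub_mul_cos_sq habs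
  have hblow' : θ ^ 2 ≤ b * π ^ 2 := by
    have h2 : 2 / π ^ 2 * θ ^ 2 ≤ 1 - Real.cos θ := by linarith
    have h3 : 2 / π ^ 2 * θ ^ 2 * (π ^ 2 / 2) ≤ (1 - Real.cos θ) * (π ^ 2 / 2) :=
      mul_le_mul_of_nonneg_right h2 (by positivity)
    have h4 : 2 / π ^ 2 * θ ^ 2 * (π ^ 2 / 2) = θ ^ 2 := by field_simp
    have h5 : b * π ^ 2 = (1 - Real.cos θ) * (π ^ 2 / 2) := by rw [hbdef]; ring
    linarith
  have hθsq : 4 / (n : ℝ) ≤ θ ^ 2 := by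
    have h4 : (2 / Real.sqrt n) ^ 2 = 4 / (n : ℝ) := by
      rw [div_pow, Real.sq_sqrt hn0.le]; norm_num
    rw [← h4]
    exact pow_le_pow_left₀ (by positivity) hθ1 2
  have hnb4 : 4 ≤ (n : ℝ) * b * π ^ 2 := by
    have hm1 : (n : ℝ) * (θ ^ 2) ≤ (n : ℝ) * (b * π ^ 2) :=
      mul_le_mul_of_nonneg_left hblow' hn0.le
    have hm2 : (n : ℝ) * (4 / (n : ℝ)) ≤ (n : ℝ) * θ ^ 2 :=
      mul_le_mul_of_nonneg_left hθsq hn0.le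
    have h5 : (n : ℝ) * (4 / (n : ℝ)) = 4 := by field_simp
    nlinarith
  have hposn : (0:ℝ) ≤ (1 - b) ^ n := pow_nonneg (by linarith) n
  have key : (1 - b) ^ n * (1 + (n : ℝ) * b) ≤ 1 := by
    have h1 : (1:ℝ) + (n : ℝ) * b ≤ (1 + b) ^ n := one_add_mul_le_pow (by linarith) n
    have h2 : (1 - b) ^ n * (1 + (n : ℝ) * b) ≤ (1 - b) ^ n * (1 + b) ^ n :=
      mul_le_mul_of_nonneg_left h1 hposn
    have h3 : (1 - b) ^ n * (1 + b) ^ n = ((1 - b) * (1 + b)) ^ n := (mul_pow _ _ _).symm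
    have h4 : ((1 - b) * (1 + b)) ^ n ≤ 1 := pow_le_one₀ (by nlinarith) (by nlinarith)
    linarith
  have han : (1 - b) ^ n * (π ^ 2 + 4) ≤ π ^ 2 := by
    have hm3 := mul_le_mul_of_nonneg_right key hπ2.le
    have hm4 := mul_le_mul_of_nonneg_left hnb4 hposn
    nlinarith
  have hX : (1 - b) ^ n ≤ π ^ 2 / (π ^ 2 + 4) := by
    rw [le_div_iff₀ (by positivity)]
    exact han
  have hbn : b ^ n ≤ 1 / 4 := by
    calc b ^ n ≤ (1 / 2 : ℝ) ^ n := pow_le_pow_left₀ hb0 hbh n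
      _ ≤ (1 / 2 : ℝ) ^ 2 := pow_le_pow_of_le_one (by norm_num) (by norm_num) hn
      _ = 1 / 4 := by norm_num
  have ha : ((1 + Real.cos θ) / 2 : ℝ) = 1 - b := by rw [hbdef]; ring
  rw [ha]
  have heq : (12 - π ^ 2) / (4 * (π ^ 2 + 4)) + π ^ 2 / (π ^ 2 + 4) + 1 / 4 = 1 := by
    field_simp; ring
  linarith

/-- Under `H₂(ν)` there is `ζ₁ ∈ (0,∞)` depending only on `ν, κ₁, κ₂` (one may take
`ζ₁ = κ₁/(20(2-ν))`) such that for every integer `n ≥ 2`,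
`aₙ = ∫₀^π (1 - ((1+cosθ)/2)^n - ((1-cosθ)/2)^n) β(θ) dθ ≥ ζ₁ n^{ν/2}`. -/
theorem angular_integral_lower_bound
    (ν κ₁ κ₂ : ℝ) (hν0 : 0 < ν) (hν2 : ν < 2) (hκ₁ : 0 < κ₁) (hκ₂ : 0 < κ₂) :
    ∃ ζ₁ > (0:ℝ), ∀ β : ℝ → ℝ, H2cond ν κ₁ κ₂ β →
      ∀ n : ℕ, 2 ≤ n →
        ζ₁ * (n : ℝ) ^ (ν / 2)
        ≤ ∫ θ in Ioc (0:ℝ) π,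
            (1 - ((1 + Real.cos θ) / 2) ^ n - ((1 - Real.cos θ) / 2) ^ n) * β θ := by
  have hπ : (3:ℝ) < π := Real.pi_gt_three
  have hπ' : π < 3.15 := Real.pi_lt_d2
  set δ : ℝ := (12 - π ^ 2) / (4 * (π ^ 2 + 4)) with hδdef
  have hδ0 : 0 < δ := by
    apply div_pos
    · nlinarith
    · nlinarith
  -- the constant c
  set c : ℝ := 2 ^ (-ν) - (π / 2) ^ (-ν) * 2 ^ (-(ν / 2)) with hcdef
  have hs2 : Real.sqrt 2 < π / 2 := by
    have h1 : Real.sqrt 2 < 1.5 := by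
      have := Real.sqrt_lt_sqrt (by norm_num : (0:ℝ) ≤ 2) (by norm_num : (2:ℝ) < 1.5 ^ 2)
      rwa [Real.sqrt_sq (by norm_num : (0:ℝ) ≤ 1.5)] at this
    linarith
  have hq0 : (0:ℝ) < 2 ^ (-(ν / 2)) := Real.rpow_pos_of_pos two_pos _
  have hc0 : 0 < c := by
    have h1 : (π / 2 : ℝ) ^ (-ν) < (Real.sqrt 2) ^ (-ν) :=
      Real.rpow_lt_rpow_of_neg (Real.sqrt_pos.2 two_pos) hs2 (by linarith)
    have h2 : (Real.sqrt 2 : ℝ) ^ (-ν) = 2 ^ (-(ν / 2)) := by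
      rw [Real.sqrt_eq_rpow, ← Real.rpow_mul (by norm_num : (0:ℝ) ≤ 2)]
      congr 1; ring
    have h3 : (2:ℝ) ^ (-(ν / 2)) * 2 ^ (-(ν / 2)) = 2 ^ (-ν) := by
      rw [← Real.rpow_add two_pos]; congr 1; ring
    have h4 := mul_lt_mul_of_pos_right h1 hq0
    rw [h2, h3] at h4
    rw [hcdef]; linarith
  refine ⟨δ * κ₁ * c / ν, by positivity, ?_⟩
  rintro β ⟨hβm, hβb⟩ n hn
  have hn2 : (2:ℝ) ≤ (n : ℝ) := by exact_mod_cast hn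
  have hn0 : (0:ℝ) < (n : ℝ) := by linarith
  have hsqn : 0 < Real.sqrt n := Real.sqrt_pos.2 hn0
  set A : ℝ := 2 / Real.sqrt n with hAdef
  have hA0 : 0 < A := by positivity
  have hAB : A < π / 2 := by
    have h1 : Real.sqrt 2 ≤ Real.sqrt n := Real.sqrt_le_sqrt hn2
    have h2 : A ≤ 2 / Real.sqrt 2 := by
      rw [hAdef]
      exact div_le_div_of_nonneg_left (by norm_num) (Real.sqrt_pos.2 two_pos) h1
    have h3 : (2:ℝ) / Real.sqrt 2 = Real.sqrt 2 := Real.div_sqrt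
    linarith
  have hβnn : ∀ θ ∈ Ioc (0:ℝ) π, 0 ≤ β θ := by
    intro θ hθ
    have h1 := (hβb θ hθ).1
    have h2 : (0:ℝ) < θ ^ (-ν - 1) := Real.rpow_pos_of_pos hθ.1 _
    nlinarith
  set F : ℝ → ℝ := fun θ =>
    (1 - ((1 + Real.cos θ) / 2) ^ n - ((1 - Real.cos θ) / 2) ^ n) * β θ with hFdef
  have hFm : Measurable F := by
    apply Measurable.mul _ hβm
    fun_prop
  -- integrability of F on Ioc 0 π
  have hg : IntegrableOn (fun θ : ℝ => (n * κ₂ / 4) * θ ^ (1 - ν)) (Ioc 0 π) := by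
    rw [← intervalIntegrable_iff_integrableOn_Ioc_of_le Real.pi_pos.le]
    exact (intervalIntegral.intervalIntegrable_rpow' (by linarith)).const_mul _
  have hF : IntegrableOn F (Ioc 0 π) := by
    apply Integrable.mono hg hFm.aestronglyMeasurable
    filter_upwards [ae_restrict_mem measurableSet_Ioc] with θ hθ
    have hθ0 : (0:ℝ) < θ := hθ.1
    have h1 := aux_nonneg n (by omega) θ
    have h2 := aux_upper n θ
    have hβ2 := (hβb θ hθ).2
    have hβ0 := hβnn θ hθ
    have hrp : (0:ℝ) < θ ^ (-ν - 1) := Real.rpow_pos_of_pos hθ0 _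
    rw [Real.norm_eq_abs, Real.norm_eq_abs, abs_of_nonneg (mul_nonneg h1 hβ0),
      abs_of_nonneg (by positivity : (0:ℝ) ≤ (n * κ₂ / 4) * θ ^ (1 - ν))]
    have hpow : θ ^ (2:ℕ) * θ ^ (-ν - 1) = θ ^ (1 - ν) := by
      rw [← Real.rpow_natCast θ 2, ← Real.rpow_add hθ0]
      congr 1; push_cast; ring
    calc F θ ≤ ((n : ℝ) * θ ^ 2 / 4) * (κ₂ * θ ^ (-ν - 1)) :=
          mul_le_mul h2 hβ2 hβ0 (by positivity)
      _ = (n * κ₂ / 4) * (θ ^ (2:ℕ) * θ ^ (-ν - 1)) := by push_cast; ring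
      _ = (n * κ₂ / 4) * θ ^ (1 - ν) := by rw [hpow]
  have hsub : Ioc A (π / 2) ⊆ Ioc (0:ℝ) π := Ioc_subset_Ioc hA0.le (by linarith)
  have hFnn : 0 ≤ᵐ[volume.restrict (Ioc (0:ℝ) π)] F := by
    filter_upwards [ae_restrict_mem measurableSet_Ioc] with θ hθ
    exact mul_nonneg (aux_nonneg n (by omega) θ) (hβnn θ hθ)
  have step1 : ∫ θ in Ioc A (π / 2), F θ ≤ ∫ θ in Ioc (0:ℝ) π, F θ :=
    setIntegral_mono_set hF hFnn (HasSubset.Subset.eventuallyLE hsub)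
  have hnot : (0:ℝ) ∉ Set.uIcc A (π / 2) := by
    rw [Set.uIcc_of_le hAB.le, Set.mem_Icc]
    rintro ⟨h1, _⟩; linarith
  have hInt2 : IntegrableOn (fun θ : ℝ => δ * κ₁ * θ ^ (-ν - 1)) (Ioc A (π / 2)) := by
    rw [← intervalIntegrable_iff_integrableOn_Ioc_of_le hAB.le]
    exact (intervalIntegral.intervalIntegrable_rpow (Or.inr hnot)).const_mul _
  have step2 : ∫ θ in Ioc A (π / 2), δ * κ₁ * θ ^ (-ν - 1) ≤ ∫ θ in Ioc A (π / 2), F θ := by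
    apply setIntegral_mono_on hInt2 (hF.mono_set hsub) measurableSet_Ioc
    intro θ hθ
    have hθ0 : 0 < θ := lt_trans hA0 hθ.1
    have hθπ : θ ≤ π := by linarith [hθ.2]
    have hβ1 := (hβb θ ⟨hθ0, hθπ⟩).1
    have hδle := aux_lower n hn (le_of_lt hθ.1) hθ.2
    have hrp : (0:ℝ) ≤ θ ^ (-ν - 1) := (Real.rpow_pos_of_pos hθ0 _).le
    calc δ * κ₁ * θ ^ (-ν - 1) = δ * (κ₁ * θ ^ (-ν - 1)) := by ring
      _ ≤ (1 - ((1 + Real.cos θ) / 2) ^ n - ((1 - Real.cos θ) / 2) ^ n) * β θ :=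
          mul_le_mul hδle hβ1 (by positivity) (le_trans hδ0.le hδle)
  have hval : ∫ θ in Ioc A (π / 2), θ ^ (-ν - 1) = (A ^ (-ν) - (π / 2) ^ (-ν)) / ν := by
    rw [← intervalIntegral.integral_of_le hAB.le,
      integral_rpow (Or.inr ⟨by intro h; linarith [hν0], hnot⟩)]
    rw [show -ν - 1 + 1 = -ν by ring, div_neg, ← neg_div, neg_sub]
  have hAν : A ^ (-ν) = 2 ^ (-ν) * (n : ℝ) ^ (ν / 2) := by
    have h1 : (Real.sqrt n) ^ (-ν) = (n : ℝ) ^ (-(ν / 2)) := by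
      rw [Real.sqrt_eq_rpow, ← Real.rpow_mul hn0.le]
      congr 1; ring
    rw [hAdef, Real.div_rpow (by norm_num) (Real.sqrt_nonneg _), h1,
      Real.rpow_neg hn0.le, div_inv_eq_mul]
  have ht : (2:ℝ) ^ (ν / 2) ≤ (n : ℝ) ^ (ν / 2) :=
    Real.rpow_le_rpow (by norm_num) hn2 (by linarith)
  have hid : (2:ℝ) ^ (-(ν / 2)) * 2 ^ (ν / 2) = 1 := by
    rw [← Real.rpow_add two_pos]; norm_num
  have hp0 : (0:ℝ) < (π / 2) ^ (-ν) := Real.rpow_pos_of_pos (by linarith) _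
  have hkey : c * (n : ℝ) ^ (ν / 2) ≤ A ^ (-ν) - (π / 2) ^ (-ν) := by
    rw [hAν, hcdef]
    have h5 : (π / 2 : ℝ) ^ (-ν) * 1 ≤ (π / 2) ^ (-ν) * ((2:ℝ) ^ (-(ν / 2)) * (n : ℝ) ^ (ν / 2)) := by
      apply mul_le_mul_of_nonneg_left _ hp0.le
      calc (1:ℝ) = 2 ^ (-(ν / 2)) * 2 ^ (ν / 2) := hid.symm
        _ ≤ 2 ^ (-(ν / 2)) * (n : ℝ) ^ (ν / 2) := mul_le_mul_of_nonneg_left ht hq0.le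
    nlinarith [h5]
  calc δ * κ₁ * c / ν * (n : ℝ) ^ (ν / 2) = δ * κ₁ * ((c * (n : ℝ) ^ (ν / 2)) / ν) := by ring
    _ ≤ δ * κ₁ * ((A ^ (-ν) - (π / 2) ^ (-ν)) / ν) := by
        apply mul_le_mul_of_nonneg_left _ (by positivity)
        exact div_le_div_of_nonneg_right hkey hν0.le
    _ = ∫ θ in Ioc A (π / 2), δ * κ₁ * θ ^ (-ν - 1) := by
        rw [MeasureTheory.integral_const_mul, hval]
    _ ≤ ∫ θ in Ioc A (π / 2), F θ := step2
    _ ≤ ∫ θ in Ioc (0:ℝ) π, F θ := step1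
end
end

section
/- For every ν ∈ [0,2) there is a constant A_ν ∈ (0,∞), depending only on ν, such that for all integers a, n with 1 ≤ a ≤ n−1, setting K_{ν,n,a} := ∫₀^{π/2} ((1+cos θ)/2)^a ((1−cos θ)/2)^{n−a} θ^{−ν−1} dθ, one has C(n,a) · K_{ν,n,a} ≤ A_ν n^{ν/2}/(n−a)^{1+ν/2}, where C(n,a) denotes the binomial coefficient. -/
open MeasureTheory Real Set

noncomputable section

/-- Log-convexity (Gautschi-type): `Γ(x+t) ≤ Γ(x) x^t` for `0 < x`, `t ∈ [0,1]`. -/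
lemma gamma_add_le {x t : ℝ} (hx : 0 < x) (ht0 : 0 ≤ t) (ht1 : t ≤ 1) :
    Real.Gamma (x + t) ≤ Real.Gamma x * x ^ t := by
  have hx1 : (0:ℝ) < x + 1 := by linarith
  have h := Real.convexOn_log_Gamma.2 (mem_Ioi.2 hx) (mem_Ioi.2 hx1)
    (by linarith : (0:ℝ) ≤ 1 - t) ht0 (by ring)
  simp only [smul_eq_mul, Function.comp_apply] at h
  have harg : (1 - t) * x + t * (x + 1) = x + t := by ring
  rw [harg] at h
  have hGx : 0 < Real.Gamma x := Real.Gamma_pos_of_pos hx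
  have hGx1 : 0 < Real.Gamma (x + 1) := Real.Gamma_pos_of_pos hx1
  have hGxt : 0 < Real.Gamma (x + t) := Real.Gamma_pos_of_pos (by linarith)
  have := Real.exp_le_exp.2 h
  rw [Real.exp_log hGxt, Real.exp_add] at this
  calc Real.Gamma (x + t)
      ≤ Real.exp ((1 - t) * Real.log (Real.Gamma x)) *
        Real.exp (t * Real.log (Real.Gamma (x + 1))) := this
    _ = Real.Gamma x ^ (1 - t) * Real.Gamma (x + 1) ^ t := by
        rw [Real.rpow_def_of_pos hGx, Real.rpow_def_of_pos hGx1, mul_comm (Real.log _),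
          mul_comm (Real.log _)]
    _ = Real.Gamma x * x ^ t := by
        rw [Real.Gamma_add_one hx.ne']
        rw [Real.mul_rpow hx.le hGx.le]
        rw [show Real.Gamma x ^ (1 - t) * (x ^ t * Real.Gamma x ^ t)
          = (Real.Gamma x ^ (1 - t) * Real.Gamma x ^ t) * x ^ t by ring,
          ← Real.rpow_add hGx]
        norm_num

/-- Real Beta integral in terms of `Real.Gamma`. -/
lemma real_beta {x y : ℝ} (hx : 0 < x) (hy : 0 < y) :
    ∫ u in (0:ℝ)..1, u ^ (x - 1) * (1 - u) ^ (y - 1)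
      = Real.Gamma x * Real.Gamma y / Real.Gamma (x + y) := by
  have hxy : 0 < x + y := by linarith
  have hB := Complex.Gamma_mul_Gamma_eq_betaIntegral
    (s := (x:ℂ)) (t := (y:ℂ)) (by simpa using hx) (by simpa using hy)
  have hbeta : Complex.betaIntegral (x:ℂ) (y:ℂ)
      = ((∫ u in (0:ℝ)..1, u ^ (x - 1) * (1 - u) ^ (y - 1) : ℝ) : ℂ) := by
    rw [Complex.betaIntegral, ← intervalIntegral.integral_ofReal]
    refine intervalIntegral.integral_congr fun u hu => ?_
    rw [uIcc_of_le zero_le_one] at hu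
    rw [Complex.ofReal_mul, Complex.ofReal_cpow hu.1, Complex.ofReal_cpow (by linarith [hu.2] : (0:ℝ) ≤ 1 - u)]
    push_cast
    ring
  rw [hbeta] at hB
  have hG : ∀ z : ℝ, Complex.Gamma (z:ℂ) = (Real.Gamma z : ℂ) := fun z => Complex.Gamma_ofReal z
  rw [show ((x:ℂ) + y) = ((x + y : ℝ) : ℂ) by push_cast; ring] at hB
  rw [hG, hG, hG] at hB
  have hGxy : Real.Gamma (x + y) ≠ 0 := (Real.Gamma_pos_of_pos hxy).ne'
  have : (Real.Gamma x * Real.Gamma y : ℂ)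
      = ((Real.Gamma (x + y) * ∫ u in (0:ℝ)..1, u ^ (x - 1) * (1 - u) ^ (y - 1) : ℝ) : ℂ) := by
    push_cast
    exact hB
  have h2 : Real.Gamma x * Real.Gamma y
      = Real.Gamma (x + y) * ∫ u in (0:ℝ)..1, u ^ (x - 1) * (1 - u) ^ (y - 1) := by
    exact_mod_cast this
  field_simp
  linarith [h2]

noncomputable def fsub (θ : ℝ) : ℝ := Real.sin (θ/2) ^ 2

noncomputable def fsub' (θ : ℝ) : ℝ := Real.sin (θ/2) * Real.cos (θ/2)

noncomputable def gfun (m a : ℕ) (α u : ℝ) : ℝ := u ^ ((m:ℝ) - α - 1) * (1 - u) ^ a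

/-- The substituted integral is bounded by twice a Beta integral. -/
lemma integral_le_beta (ν α : ℝ) (hν0 : 0 ≤ ν) (hαdef : α = ν / 2) (hα1 : α < 1)
    (m a : ℕ) (hm1 : 1 ≤ m) :
    (∫ θ in Ioo (0:ℝ) (π / 2),
        ((1 + Real.cos θ) / 2) ^ a * ((1 - Real.cos θ) / 2) ^ m * θ ^ (-ν - 1))
      ≤ 2 * (Real.Gamma ((m:ℝ) - α) * Real.Gamma ((a:ℝ) + 1)
          / Real.Gamma (((m:ℝ) - α) + ((a:ℝ) + 1))) := by
  have hα0 : 0 ≤ α := by rw [hαdef]; linarith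
  have hmR : (1:ℝ) ≤ (m:ℝ) := by exact_mod_cast hm1
  have hmpos : (0:ℝ) < (m:ℝ) := by linarith
  have hπ : (0:ℝ) < π := Real.pi_pos
  have hms : MeasurableSet (Ioo (0:ℝ) (π/2)) := measurableSet_Ioo
  have hsin_pos : ∀ θ ∈ Ioo (0:ℝ) (π/2), 0 < Real.sin (θ/2) := by
    intro θ hθ
    exact Real.sin_pos_of_pos_of_lt_pi (by linarith [hθ.1]) (by nlinarith [hθ.2, hπ])
  have hcos_pos : ∀ θ ∈ Ioo (0:ℝ) (π/2), 0 < Real.cos (θ/2) := by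
    intro θ hθ
    exact Real.cos_pos_of_mem_Ioo ⟨by linarith [hθ.1, hπ], by linarith [hθ.2, hπ]⟩
  have hderiv : ∀ θ ∈ Ioo (0:ℝ) (π/2), HasDerivWithinAt fsub (fsub' θ) (Ioo (0:ℝ) (π/2)) θ := by
    intro θ _
    have h1 : HasDerivAt (fun θ:ℝ => θ/2) (1/2) θ := (hasDerivAt_id θ).div_const 2
    have h2 : HasDerivAt (fun θ:ℝ => Real.sin (θ/2)) (Real.cos (θ/2) * (1/2)) θ :=
      by have := (Real.hasDerivAt_sin (θ/2)).comp θ h1; exact this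
    have h3 := h2.pow 2
    have h4 : ((2:ℕ):ℝ) * Real.sin (θ/2) ^ (2-1) * (Real.cos (θ/2) * (1/2)) = fsub' θ := by
      simp [fsub']; ring
    rw [h4] at h3
    exact h3.hasDerivWithinAt
  have hmono : StrictMonoOn fsub (Ioo (0:ℝ) (π/2)) := by
    intro x hx y hy hxy
    have h1 : Real.sin (x/2) < Real.sin (y/2) := by
      apply Real.strictMonoOn_sin ⟨by linarith [hx.1, hπ], by linarith [hx.2, hπ]⟩
        ⟨by linarith [hy.1, hπ], by linarith [hy.2, hπ]⟩ (by linarith)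
    have h2 := hsin_pos x hx
    simpa [fsub] using pow_lt_pow_left₀ h1 h2.le (two_ne_zero)
  have hinj : InjOn fsub (Ioo (0:ℝ) (π/2)) := hmono.injOn
  have hsub : fsub '' (Ioo (0:ℝ) (π/2)) ⊆ Ioo (0:ℝ) 1 := by
    rintro _ ⟨θ, hθ, rfl⟩
    have h1 := hsin_pos θ hθ
    have h2 : Real.sin (θ/2) < 1 := by
      have h := Real.strictMonoOn_sin
        (show θ/2 ∈ Icc (-(π/2)) (π/2) from
          ⟨by linarith [hθ.1, hπ], by linarith [hθ.2, hπ]⟩)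
        (show π/2 ∈ Icc (-(π/2)) (π/2) from ⟨by linarith [hπ], le_refl _⟩)
        (show θ/2 < π/2 by linarith [hθ.2, hπ])
      simpa using h
    exact ⟨pow_pos h1 2, pow_lt_one₀ h1.le h2 two_ne_zero⟩
  have hexp : (-1:ℝ) < (m:ℝ) - α - 1 := by linarith
  have hrint : IntegrableOn (fun u:ℝ => u ^ ((m:ℝ) - α - 1)) (Ioo 0 1) :=
    (intervalIntegral.intervalIntegrable_rpow' (a := (0:ℝ)) (b := 1) hexp).1.mono_set
      Ioo_subset_Ioc_self
  have hgmeas : Measurable (gfun m a α) := by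
    exact (measurable_id.pow_const ((m:ℝ) - α - 1)).mul
      ((continuous_const.sub continuous_id).pow a).measurable
  have hg_int : IntegrableOn (gfun m a α) (Ioo 0 1) := by
    refine Integrable.mono' hrint hgmeas.aestronglyMeasurable.restrict ?_
    refine (ae_restrict_iff' measurableSet_Ioo).2 (Filter.Eventually.of_forall fun u hu => ?_)
    have h1 : 0 ≤ u ^ ((m:ℝ) - α - 1) := Real.rpow_nonneg hu.1.le _
    have h2 : (1-u)^a ≤ 1 := pow_le_one₀ (by linarith [hu.2]) (by linarith [hu.1])
    have h2' : 0 ≤ (1-u)^a := pow_nonneg (by linarith [hu.2]) a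
    have h3 : gfun m a α u = u ^ ((m:ℝ) - α - 1) * (1-u)^a := rfl
    rw [Real.norm_eq_abs, h3, abs_of_nonneg (mul_nonneg h1 h2')]
    calc u ^ ((m:ℝ) - α - 1) * (1-u)^a ≤ u ^ ((m:ℝ) - α - 1) * 1 :=
          mul_le_mul_of_nonneg_left h2 h1
      _ = u ^ ((m:ℝ) - α - 1) := mul_one _
  have hg_int_im : IntegrableOn (gfun m a α) (fsub '' (Ioo (0:ℝ) (π/2))) :=
    hg_int.mono_set hsub
  have hCoV : (∫ u in fsub '' (Ioo (0:ℝ) (π/2)), gfun m a α u)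
      = ∫ θ in Ioo (0:ℝ) (π/2), |fsub' θ| • gfun m a α (fsub θ) :=
    integral_image_eq_integral_abs_deriv_smul hms hderiv hinj _
  have hint_sub : IntegrableOn (fun θ => |fsub' θ| • gfun m a α (fsub θ)) (Ioo (0:ℝ) (π/2)) :=
    (integrableOn_image_iff_integrableOn_abs_deriv_smul hms hderiv hinj _).1 hg_int_im
  -- pointwise bound
  have hpt : ∀ θ ∈ Ioo (0:ℝ) (π/2),
      ((1 + Real.cos θ)/2)^a * ((1 - Real.cos θ)/2)^m * θ^(-ν-1)
        ≤ 2 * (|fsub' θ| • gfun m a α (fsub θ)) := by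
    intro θ hθ
    have hθ0 : 0 < θ := hθ.1
    have hsp := hsin_pos θ hθ
    have hcp := hcos_pos θ hθ
    have hcosθ : Real.cos θ = 1 - 2 * Real.sin (θ/2) ^ 2 := by
      have h1 : Real.cos (2 * (θ/2)) = 2 * Real.cos (θ/2) ^ 2 - 1 := Real.cos_two_mul _
      rw [show 2*(θ/2) = θ by ring] at h1
      rw [h1, Real.cos_sq']
      ring
    have hS2 : (0:ℝ) < Real.sin (θ/2) ^ 2 := pow_pos hsp 2
    have habs : |fsub' θ| = Real.sin (θ/2) * Real.cos (θ/2) :=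
      abs_of_pos (mul_pos hsp hcp)
    have hcore : θ ^ (-ν-1) ≤ 2 * (Real.sin (θ/2) * Real.cos (θ/2)
        * (Real.sin (θ/2)^2) ^ (-α - 1)) := by
      have e1 : ((Real.sin (θ/2))^2 : ℝ) ^ (-α-1) = Real.sin (θ/2) ^ (2 * (-α-1)) := by
        rw [← Real.rpow_natCast (Real.sin (θ/2)) 2, ← Real.rpow_mul hsp.le]
        norm_num
      have e2 : (2:ℝ) * (-α - 1) = -ν - 2 := by rw [hαdef]; ring
      have e3 : Real.sin (θ/2) * Real.sin (θ/2) ^ (-ν - 2 : ℝ)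
          = Real.sin (θ/2) ^ (-ν - 1 : ℝ) := by
        nth_rewrite 1 [← Real.rpow_one (Real.sin (θ/2))]
        rw [← Real.rpow_add hsp]
        ring_nf
      have h4 : θ ^ (-ν-1) ≤ Real.sin (θ/2) ^ (-ν - 1 : ℝ) := by
        apply Real.rpow_le_rpow_of_nonpos hsp ?_ (by linarith : -ν - 1 ≤ 0)
        calc Real.sin (θ/2) ≤ θ/2 := (Real.sin_lt (by linarith)).le
          _ ≤ θ := by linarith
      have h5 : (1:ℝ) ≤ 2 * Real.cos (θ/2) := by
        have hc3 : Real.cos (π/3) < Real.cos (θ/2) := by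
          apply Real.strictAntiOn_cos ⟨by linarith [hθ0], by linarith [hθ.2, hπ]⟩
            ⟨by linarith [hπ], by linarith [hπ]⟩ (by linarith [hθ.2, hπ])
        rw [Real.cos_pi_div_three] at hc3
        linarith
      calc θ ^ (-ν-1) ≤ Real.sin (θ/2) ^ (-ν - 1 : ℝ) := h4
        _ ≤ (2 * Real.cos (θ/2)) * Real.sin (θ/2) ^ (-ν - 1 : ℝ) :=
            le_mul_of_one_le_left (Real.rpow_nonneg hsp.le _) h5
        _ = 2 * (Real.sin (θ/2) * Real.cos (θ/2) * (Real.sin (θ/2)^2) ^ (-α - 1)) := by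
            rw [e1, e2, ← e3]; ring
    have hq1 : (1 + Real.cos θ)/2 = 1 - Real.sin (θ/2)^2 := by rw [hcosθ]; ring
    have hq2 : (1 - Real.cos θ)/2 = Real.sin (θ/2)^2 := by rw [hcosθ]; ring
    have hgf : gfun m a α (fsub θ)
        = (Real.sin (θ/2)^2) ^ ((m:ℝ) - α - 1) * (1 - Real.sin (θ/2)^2)^a := rfl
    have hsplit : ((Real.sin (θ/2)^2 : ℝ)) ^ ((m:ℝ) - α - 1)
        = (Real.sin (θ/2)^2)^m * (Real.sin (θ/2)^2) ^ (-α - 1 : ℝ) := by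
      rw [show (m:ℝ) - α - 1 = (m:ℝ) + (-α - 1) by ring, Real.rpow_add hS2,
        Real.rpow_natCast]
    have hq3 : (0:ℝ) ≤ (1 - Real.sin (θ/2)^2)^a * (Real.sin (θ/2)^2)^m := by
      have h6 : Real.sin (θ/2)^2 ≤ 1 := by
        rw [← hq2]; nlinarith [Real.neg_one_le_cos θ]
      exact mul_nonneg (pow_nonneg (by linarith) a) (pow_nonneg (sq_nonneg _) m)
    rw [hq1, hq2, smul_eq_mul, habs, hgf, hsplit]
    calc (1 - Real.sin (θ/2)^2)^a * (Real.sin (θ/2)^2)^m * θ^(-ν-1)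
        ≤ (1 - Real.sin (θ/2)^2)^a * (Real.sin (θ/2)^2)^m
            * (2 * (Real.sin (θ/2) * Real.cos (θ/2) * (Real.sin (θ/2)^2) ^ (-α - 1 : ℝ))) :=
          mul_le_mul_of_nonneg_left hcore hq3
      _ = 2 * (Real.sin (θ/2) * Real.cos (θ/2) *
            ((Real.sin (θ/2)^2)^m * (Real.sin (θ/2)^2) ^ (-α - 1 : ℝ)
              * (1 - Real.sin (θ/2)^2)^a)) := by ring
  -- integral comparison
  have hIle : (∫ θ in Ioo (0:ℝ) (π/2),
        ((1 + Real.cos θ)/2)^a * ((1 - Real.cos θ)/2)^m * θ^(-ν-1))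
      ≤ ∫ θ in Ioo (0:ℝ) (π/2), 2 * (|fsub' θ| • gfun m a α (fsub θ)) := by
    apply integral_mono_of_nonneg
    · refine (ae_restrict_iff' hms).2 (Filter.Eventually.of_forall fun θ hθ => ?_)
      have h1 := Real.neg_one_le_cos θ
      have h2 := Real.cos_le_one θ
      have h3 : (0:ℝ) ≤ θ := hθ.1.le
      exact mul_nonneg (mul_nonneg (pow_nonneg (by linarith) a)
        (pow_nonneg (by linarith) m)) (Real.rpow_nonneg h3 _)
    · exact hint_sub.const_mul 2
    · exact (ae_restrict_iff' hms).2 (Filter.Eventually.of_forall hpt)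
  have hIle2 : (∫ θ in Ioo (0:ℝ) (π/2), 2 * (|fsub' θ| • gfun m a α (fsub θ)))
      = 2 * ∫ u in fsub '' (Ioo (0:ℝ) (π/2)), gfun m a α u := by
    rw [MeasureTheory.integral_const_mul, hCoV]
  have him_le : (∫ u in fsub '' (Ioo (0:ℝ) (π/2)), gfun m a α u)
      ≤ ∫ u in Ioo (0:ℝ) 1, gfun m a α u := by
    refine setIntegral_mono_set hg_int ?_ (HasSubset.Subset.eventuallyLE hsub)
    refine (ae_restrict_iff' measurableSet_Ioo).2 (Filter.Eventually.of_forall fun u hu => ?_)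
    exact mul_nonneg (Real.rpow_nonneg hu.1.le _) (pow_nonneg (by linarith [hu.2]) a)
  have hbeta : (∫ u in Ioo (0:ℝ) 1, gfun m a α u)
      = Real.Gamma ((m:ℝ) - α) * Real.Gamma ((a:ℝ) + 1)
          / Real.Gamma (((m:ℝ) - α) + ((a:ℝ) + 1)) := by
    have h1 : (∫ u in Ioo (0:ℝ) 1, gfun m a α u) = ∫ u in (0:ℝ)..1, gfun m a α u := by
      rw [intervalIntegral.integral_of_le zero_le_one, integral_Ioc_eq_integral_Ioo]
    have h2 : ∀ u : ℝ, gfun m a α u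
        = u ^ (((m:ℝ) - α) - 1) * (1 - u) ^ (((a:ℝ) + 1) - 1) := by
      intro u
      have h3 : (((a:ℝ) + 1) - 1) = ((a:ℕ):ℝ) := by ring
      show u ^ ((m:ℝ) - α - 1) * (1 - u) ^ a = _
      rw [h3, Real.rpow_natCast]
    have h2' : (∫ u in (0:ℝ)..1, gfun m a α u)
        = ∫ u in (0:ℝ)..1, u ^ (((m:ℝ) - α) - 1) * (1 - u) ^ (((a:ℝ) + 1) - 1) :=
      intervalIntegral.integral_congr fun u _ => h2 u
    rw [h1, h2', real_beta (by linarith : (0:ℝ) < (m:ℝ) - α) (by positivity : (0:ℝ) < (a:ℝ)+1)]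
  calc (∫ θ in Ioo (0:ℝ) (π/2),
        ((1 + Real.cos θ)/2)^a * ((1 - Real.cos θ)/2)^m * θ^(-ν-1))
      ≤ ∫ θ in Ioo (0:ℝ) (π/2), 2 * (|fsub' θ| • gfun m a α (fsub θ)) := hIle
    _ = 2 * ∫ u in fsub '' (Ioo (0:ℝ) (π/2)), gfun m a α u := hIle2
    _ ≤ 2 * ∫ u in Ioo (0:ℝ) 1, gfun m a α u := by linarith [him_le]
    _ = 2 * (Real.Gamma ((m:ℝ) - α) * Real.Gamma ((a:ℝ) + 1)
          / Real.Gamma (((m:ℝ) - α) + ((a:ℝ) + 1))) := by rw [hbeta]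

/-- For every `ν ∈ [0,2)` there is `A_ν ∈ (0,∞)` such that for all integers `1 ≤ a ≤ n-1`,
with `K_{ν,n,a} = ∫₀^{π/2} ((1+cosθ)/2)^a ((1-cosθ)/2)^{n-a} θ^{-ν-1} dθ`,
one has `C(n,a) K_{ν,n,a} ≤ A_ν n^{ν/2}/(n-a)^{1+ν/2}`. -/
theorem singular_beta_integral_bound
    (ν : ℝ) (hν0 : 0 ≤ ν) (hν2 : ν < 2) :
    ∃ Aν > (0:ℝ), ∀ n a : ℕ, 1 ≤ a → a ≤ n - 1 →
      (n.choose a : ℝ)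
        * ∫ θ in Ioo (0:ℝ) (π / 2),
            ((1 + Real.cos θ) / 2) ^ a * ((1 - Real.cos θ) / 2) ^ (n - a) * θ ^ (-ν - 1)
      ≤ Aν * (n : ℝ) ^ (ν / 2) / ((n - a : ℕ) : ℝ) ^ (1 + ν / 2) := by
  have hα1 : ν / 2 < 1 := by linarith
  have hα0 : 0 ≤ ν / 2 := by linarith
  have h1α : (0:ℝ) < 1 - ν / 2 := by linarith
  refine ⟨4 / (1 - ν / 2), by positivity, ?_⟩
  intro n a ha1 han
  set α : ℝ := ν / 2 with hαdef
  have hn2 : 2 ≤ n := by omega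
  have hm1 : 1 ≤ n - a := by omega
  have ham : a + (n - a) = n := by omega
  have haln : a ≤ n := by omega
  set m : ℕ := n - a with hmdef
  have hmR : (1:ℝ) ≤ (m:ℝ) := by exact_mod_cast hm1
  have hmpos : (0:ℝ) < (m:ℝ) := by linarith
  have hnR : (2:ℝ) ≤ (n:ℝ) := by exact_mod_cast hn2
  have hnm : (a:ℝ) + (m:ℝ) = (n:ℝ) := by exact_mod_cast congrArg (Nat.cast : ℕ → ℝ) ham
  have hbound := integral_le_beta ν α hν0 hαdef hα1 m a hm1
  rw [show ((m:ℝ) - α) + ((a:ℝ) + 1) = (n:ℝ) + 1 - α by rw [← hnm]; ring] at hbound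
  -- Gamma estimates
  have hG1pos : 0 < Real.Gamma ((m:ℝ) - α) := Real.Gamma_pos_of_pos (by linarith)
  have hG2pos : 0 < Real.Gamma ((n:ℝ) + 1 - α) := Real.Gamma_pos_of_pos (by linarith)
  have hGm : Real.Gamma ((m:ℝ)) * (m:ℝ) = (m.factorial : ℝ) := by
    rw [mul_comm, ← Real.Gamma_add_one (by positivity : (m:ℝ) ≠ 0)]
    exact_mod_cast Real.Gamma_nat_eq_factorial m
  have e1 : ((m:ℝ) - α) * Real.Gamma ((m:ℝ) - α) = Real.Gamma ((m:ℝ) + 1 - α) := by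
    rw [show (m:ℝ)+1-α = ((m:ℝ)-α) + 1 by ring,
      Real.Gamma_add_one (by linarith : (m:ℝ) - α ≠ 0)]
  have e2 : Real.Gamma ((m:ℝ) + 1 - α) ≤ Real.Gamma (m:ℝ) * (m:ℝ) ^ (1 - α) := by
    have h := gamma_add_le (x := (m:ℝ)) (t := 1 - α) hmpos (by linarith) (by linarith)
    rwa [show (m:ℝ) + (1 - α) = (m:ℝ)+1-α by ring] at h
  have e3 : (n.factorial : ℝ) ≤ Real.Gamma ((n:ℝ) + 1 - α) * ((n:ℝ) + 1 - α) ^ α := by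
    have h := gamma_add_le (x := (n:ℝ)+1-α) (t := α) (by linarith) hα0 hα1.le
    rw [show (n:ℝ)+1-α+α = (n:ℝ)+1 by ring] at h
    calc (n.factorial:ℝ) = Real.Gamma ((n:ℝ)+1) := by
          exact_mod_cast (Real.Gamma_nat_eq_factorial n).symm
      _ ≤ Real.Gamma ((n:ℝ) + 1 - α) * ((n:ℝ) + 1 - α) ^ α := h
  have r1 : ((n:ℝ)+1-α) ^ α ≤ 2 * (n:ℝ)^α := by
    calc ((n:ℝ)+1-α)^α ≤ (2*(n:ℝ))^α :=
          Real.rpow_le_rpow (by linarith) (by linarith) hα0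
      _ = 2^α * (n:ℝ)^α := Real.mul_rpow (by norm_num) (by positivity)
      _ ≤ 2 * (n:ℝ)^α := by
          have h2 : (2:ℝ)^α ≤ 2^(1:ℝ) :=
            Real.rpow_le_rpow_of_exponent_le one_le_two hα1.le
          rw [Real.rpow_one] at h2
          exact mul_le_mul_of_nonneg_right h2 (Real.rpow_nonneg (by linarith) _)
  have r2 : (m:ℝ) ^ (1+α) = (m:ℝ) * (m:ℝ)^α := by
    rw [Real.rpow_add hmpos, Real.rpow_one]
  have r3 : (m:ℝ) ^ (1-α) * (m:ℝ)^α = (m:ℝ) := by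
    rw [← Real.rpow_add hmpos]
    norm_num
  have hma : (1-α) * (m:ℝ) ≤ (m:ℝ) - α := by nlinarith
  have hchoose : (n.choose a : ℝ) * (a.factorial:ℝ) * (m.factorial:ℝ) = (n.factorial:ℝ) := by
    exact_mod_cast congrArg (Nat.cast : ℕ → ℝ)
      (Nat.choose_mul_factorial_mul_factorial haln)
  have hmα : (0:ℝ) ≤ (m:ℝ)^α := Real.rpow_nonneg hmpos.le _
  have hnα : (0:ℝ) ≤ (n:ℝ)^α := Real.rpow_nonneg (by linarith) _
  have hPA : (0:ℝ) ≤ (n.choose a : ℝ) * (a.factorial:ℝ) := by positivity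
  have key : (n.choose a : ℝ) * (a.factorial:ℝ) * Real.Gamma ((m:ℝ) - α)
        * ((1-α) * (m:ℝ)^(1+α))
      ≤ 2 * (n:ℝ)^α * Real.Gamma ((n:ℝ) + 1 - α) := by
    calc (n.choose a : ℝ) * (a.factorial:ℝ) * Real.Gamma ((m:ℝ) - α)
          * ((1-α) * (m:ℝ)^(1+α))
        = ((n.choose a : ℝ) * (a.factorial:ℝ))
            * (((1-α) * (m:ℝ)) * Real.Gamma ((m:ℝ) - α)) * (m:ℝ)^α := by
          rw [r2]; ring
      _ ≤ ((n.choose a : ℝ) * (a.factorial:ℝ))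
            * ((((m:ℝ) - α)) * Real.Gamma ((m:ℝ) - α)) * (m:ℝ)^α := by
          apply mul_le_mul_of_nonneg_right _ hmα
          apply mul_le_mul_of_nonneg_left _ hPA
          exact mul_le_mul_of_nonneg_right hma hG1pos.le
      _ = ((n.choose a : ℝ) * (a.factorial:ℝ)) * Real.Gamma ((m:ℝ) + 1 - α) * (m:ℝ)^α := by
          rw [e1]
      _ ≤ ((n.choose a : ℝ) * (a.factorial:ℝ))
            * (Real.Gamma (m:ℝ) * (m:ℝ) ^ (1-α)) * (m:ℝ)^α := by
          apply mul_le_mul_of_nonneg_right _ hmα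
          exact mul_le_mul_of_nonneg_left e2 hPA
      _ = ((n.choose a : ℝ) * (a.factorial:ℝ)) * Real.Gamma (m:ℝ)
            * ((m:ℝ) ^ (1-α) * (m:ℝ)^α) := by ring
      _ = (n.choose a : ℝ) * (a.factorial:ℝ) * (m.factorial:ℝ) := by
          rw [r3, ← hGm]; ring
      _ = (n.factorial:ℝ) := hchoose
      _ ≤ Real.Gamma ((n:ℝ) + 1 - α) * ((n:ℝ) + 1 - α) ^ α := e3
      _ ≤ Real.Gamma ((n:ℝ) + 1 - α) * (2 * (n:ℝ)^α) :=
          mul_le_mul_of_nonneg_left r1 hG2pos.le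
      _ = 2 * (n:ℝ)^α * Real.Gamma ((n:ℝ) + 1 - α) := by ring
  have hm1α : (0:ℝ) < (m:ℝ)^(1+α) := Real.rpow_pos_of_pos hmpos _
  have hGa : Real.Gamma ((a:ℝ) + 1) = (a.factorial : ℝ) := by
    exact_mod_cast Real.Gamma_nat_eq_factorial a
  have hfinal : (n.choose a : ℝ)
        * (2 * (Real.Gamma ((m:ℝ) - α) * Real.Gamma ((a:ℝ) + 1)
            / Real.Gamma ((n:ℝ) + 1 - α)))
      ≤ 4/(1-α) * (n:ℝ)^α / (m:ℝ)^(1+α) := by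
    rw [hGa]
    rw [show (n.choose a : ℝ)
          * (2 * (Real.Gamma ((m:ℝ) - α) * (a.factorial:ℝ) / Real.Gamma ((n:ℝ) + 1 - α)))
        = ((n.choose a : ℝ) * (a.factorial:ℝ) * Real.Gamma ((m:ℝ) - α) * 2)
            / Real.Gamma ((n:ℝ) + 1 - α) by ring,
      show (4:ℝ)/(1-α) * (n:ℝ)^α / (m:ℝ)^(1+α)
        = (4 * (n:ℝ)^α) / ((1-α) * (m:ℝ)^(1+α)) by
          rw [div_mul_eq_mul_div, div_div],
      div_le_div_iff₀ hG2pos (by positivity)]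
    nlinarith [key]
  calc (n.choose a : ℝ)
        * ∫ θ in Ioo (0:ℝ) (π / 2),
            ((1 + Real.cos θ) / 2) ^ a * ((1 - Real.cos θ) / 2) ^ m * θ ^ (-ν - 1)
      ≤ (n.choose a : ℝ)
        * (2 * (Real.Gamma ((m:ℝ) - α) * Real.Gamma ((a:ℝ) + 1)
            / Real.Gamma ((n:ℝ) + 1 - α))) := by
        exact mul_le_mul_of_nonneg_left hbound (by positivity : (0:ℝ) ≤ (n.choose a : ℝ))
    _ ≤ 4/(1-α) * (n:ℝ)^α / (m:ℝ)^(1+α) := hfinal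
end
end

section
/- Let f be a probability measure on ℝ³, and let σ₀ ∈ (0,∞), α ∈ [1,∞) and K ∈ [1,∞). If sup_{n ≥ 0} σ₀^n m_{2n}(f)/(n!)^α ≤ K, then ∫_{ℝ³} exp(σ₀^{1/α} |v|^{2/α}/2) f(dv) ≤ 2 K^{1/α}. -/
open MeasureTheory Real Set

noncomputable section

/-- Control of exponential moments by even integer moments: if
`sup_n σ₀^n m_{2n}(f)/(n!)^α ≤ K` with `σ₀ > 0`, `α ≥ 1`, `K ≥ 1`, then
`∫ exp(σ₀^{1/α} |v|^{2/α}/2) f(dv) ≤ 2 K^{1/α}`. -/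
theorem exp_moment_from_even_moments
    (f : Measure V3) (hf : IsProbabilityMeasure f)
    (σ₀ α K : ℝ) (hσ₀ : 0 < σ₀) (hα : 1 ≤ α) (hK : 1 ≤ K)
    (h : ∀ n : ℕ, ENNReal.ofReal (σ₀ ^ n) * momL (2 * (n : ℝ)) f
        ≤ ENNReal.ofReal (K * (n.factorial : ℝ) ^ α)) :
    ∫⁻ v, ENNReal.ofReal (Real.exp (σ₀ ^ (1 / α) * ‖v‖ ^ (2 / α) / 2)) ∂f
      ≤ ENNReal.ofReal (2 * K ^ (1 / α)) := by
  have hα0 : (0:ℝ) < α := by linarith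
  have hK0 : (0:ℝ) < K := by linarith
  set c : ℝ := σ₀ ^ (1 / α) with hc
  have hc0 : 0 < c := Real.rpow_pos_of_pos hσ₀ _
  -- moment bound
  have hmom : ∀ n : ℕ, momL (2 * (n:ℝ)) f ≤ ENNReal.ofReal (K * (n.factorial : ℝ) ^ α / σ₀ ^ n) := by
    intro n
    have hσn : (0:ℝ) < σ₀ ^ n := pow_pos hσ₀ n
    rw [ENNReal.ofReal_div_of_pos hσn]
    rw [ENNReal.le_div_iff_mul_le (Or.inl (ENNReal.ofReal_pos.mpr hσn).ne')
      (Or.inl ENNReal.ofReal_ne_top)]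
    rw [mul_comm]
    exact h n
  -- Jensen
  have hjen : ∀ n : ℕ, momL (2 * (n:ℝ) / α) f ≤ (momL (2 * (n:ℝ)) f) ^ (1 / α) := by
    intro n
    rcases Nat.eq_zero_or_pos n with hn | hn
    · subst hn
      simp only [Nat.cast_zero, mul_zero, zero_div]
      have h1 : momL 0 f = 1 := by
        simp [momL, ENNReal.rpow_zero, lintegral_one, measure_univ]
      rw [h1]; simp
    · have hn0 : (0:ℝ) < (n:ℝ) := by exact_mod_cast hn
      have hp0 : (0:ℝ) < 2 * (n:ℝ) / α := by positivity
      have hpq : 2 * (n:ℝ) / α ≤ 2 * (n:ℝ) := by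
        rw [div_le_iff₀ hα0]; nlinarith
      have hmeas : AEStronglyMeasurable (fun v : V3 => ‖v‖) f :=
        continuous_norm.aestronglyMeasurable
      have key := eLpNorm'_le_eLpNorm'_of_exponent_le hp0 hpq f hmeas
      rw [eLpNorm', eLpNorm'] at key
      simp only [enorm_norm] at key
      have key2 := ENNReal.rpow_le_rpow key hp0.le
      rw [← ENNReal.rpow_mul, ← ENNReal.rpow_mul, one_div_mul_cancel hp0.ne',
        ENNReal.rpow_one] at key2
      have he : 1 / (2 * (n:ℝ)) * (2 * (n:ℝ) / α) = 1 / α := by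
        field_simp
      rw [he] at key2
      exact key2
  -- per-term bound
  have hterm : ∀ n : ℕ,
      ENNReal.ofReal ((c / 2) ^ n / n.factorial) * momL (2 * (n:ℝ) / α) f
        ≤ ENNReal.ofReal (K ^ (1/α) * (1/2) ^ n) := by
    intro n
    have hfac : (0:ℝ) < (n.factorial : ℝ) := by exact_mod_cast n.factorial_pos
    have hσn : (0:ℝ) < σ₀ ^ n := pow_pos hσ₀ n
    have h1 : momL (2 * (n:ℝ) / α) f
        ≤ ENNReal.ofReal ((K * (n.factorial : ℝ) ^ α / σ₀ ^ n) ^ (1/α)) := by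
      refine (hjen n).trans ?_
      rw [← ENNReal.ofReal_rpow_of_nonneg (by positivity) (by positivity)]
      exact ENNReal.rpow_le_rpow (hmom n) (by positivity)
    have e1 : (K * (n.factorial : ℝ) ^ α / σ₀ ^ n) ^ (1/α)
        = K ^ (1/α) * (n.factorial : ℝ) / c ^ n := by
      rw [Real.div_rpow (by positivity) hσn.le,
        Real.mul_rpow hK0.le (by positivity),
        ← Real.rpow_natCast σ₀ n, ← Real.rpow_mul hσ₀.le,
        ← Real.rpow_mul hfac.le, mul_one_div_cancel hα0.ne', Real.rpow_one]
      congr 1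
      rw [hc, ← Real.rpow_natCast (σ₀ ^ (1/α)) n, ← Real.rpow_mul hσ₀.le, mul_comm]
    calc ENNReal.ofReal ((c / 2) ^ n / n.factorial) * momL (2 * (n:ℝ) / α) f
        ≤ ENNReal.ofReal ((c / 2) ^ n / n.factorial) *
            ENNReal.ofReal ((K * (n.factorial : ℝ) ^ α / σ₀ ^ n) ^ (1/α)) :=
          mul_le_mul_right h1 _
      _ = ENNReal.ofReal ((c / 2) ^ n / n.factorial *
            (K * (n.factorial : ℝ) ^ α / σ₀ ^ n) ^ (1/α)) :=
          (ENNReal.ofReal_mul (by positivity)).symm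
      _ = ENNReal.ofReal (K ^ (1/α) * (1/2) ^ n) := by
          congr 1
          rw [e1, div_pow]
          field_simp
          rw [← mul_pow]; norm_num
  -- pointwise series expansion
  have hpt : ∀ v : V3, ENNReal.ofReal (Real.exp (c * ‖v‖ ^ (2/α) / 2))
      = ∑' n : ℕ, ENNReal.ofReal ((c/2)^n / n.factorial) * (‖v‖₊ : ENNReal) ^ (2 * (n:ℝ) / α) := by
    intro v
    set t : ℝ := ‖v‖ ^ (2/α) with hts
    have ht : 0 ≤ t := Real.rpow_nonneg (norm_nonneg v) _
    have hexp : Real.exp (c * t / 2) = ∑' n : ℕ, (c * t / 2)^n / n.factorial := by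
      rw [Real.exp_eq_exp_ℝ, NormedSpace.exp_eq_tsum_div]
    rw [hexp, ENNReal.ofReal_tsum_of_nonneg (fun n => by positivity)
      (Real.summable_pow_div_factorial _)]
    congr 1; funext n
    have hsplit : (c * t / 2)^n / n.factorial = ((c/2)^n / n.factorial) * t^n := by
      have hd : c * t / 2 = (c/2) * t := by ring
      rw [hd, mul_pow]; ring
    rw [hsplit, ENNReal.ofReal_mul (by positivity)]
    congr 1
    rw [hts, ← Real.rpow_natCast (‖v‖ ^ (2/α)) n, ← Real.rpow_mul (norm_nonneg v),
      show (2/α) * (n:ℝ) = 2 * (n:ℝ) / α by ring,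
      ← ENNReal.ofReal_rpow_of_nonneg (norm_nonneg v) (by positivity),
      ofReal_norm, enorm_eq_nnnorm]
  -- put together
  have hmeasn : ∀ n : ℕ, Measurable
      (fun v : V3 => ENNReal.ofReal ((c/2)^n / n.factorial) * (‖v‖₊ : ENNReal) ^ (2 * (n:ℝ) / α)) :=
    fun n => measurable_const.mul (measurable_nnnorm.coe_nnreal_ennreal.pow_const _)
  calc ∫⁻ v, ENNReal.ofReal (Real.exp (c * ‖v‖ ^ (2/α) / 2)) ∂f
      = ∫⁻ v, ∑' n : ℕ, ENNReal.ofReal ((c/2)^n / n.factorial)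
          * (‖v‖₊ : ENNReal) ^ (2 * (n:ℝ) / α) ∂f := by
        exact lintegral_congr hpt
    _ = ∑' n : ℕ, ∫⁻ v, ENNReal.ofReal ((c/2)^n / n.factorial)
          * (‖v‖₊ : ENNReal) ^ (2 * (n:ℝ) / α) ∂f :=
        lintegral_tsum (fun n => (hmeasn n).aemeasurable)
    _ = ∑' n : ℕ, ENNReal.ofReal ((c/2)^n / n.factorial) * momL (2 * (n:ℝ) / α) f := by
        refine tsum_congr fun n => ?_
        exact lintegral_const_mul _ (measurable_nnnorm.coe_nnreal_ennreal.pow_const _)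
    _ ≤ ∑' n : ℕ, ENNReal.ofReal (K ^ (1/α) * (1/2) ^ n) := ENNReal.tsum_le_tsum hterm
    _ = ENNReal.ofReal (2 * K ^ (1/α)) := by
        have hhalf : ENNReal.ofReal ((1:ℝ)/2) = 2⁻¹ := by
          rw [show ((1:ℝ)/2) = (2:ℝ)⁻¹ by norm_num, ENNReal.ofReal_inv_of_pos two_pos]
          norm_num
        calc ∑' n : ℕ, ENNReal.ofReal (K ^ (1/α) * (1/2) ^ n)
            = ∑' n : ℕ, ENNReal.ofReal (K ^ (1/α)) * (ENNReal.ofReal ((1:ℝ)/2)) ^ n := by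
              refine tsum_congr fun n => ?_
              rw [ENNReal.ofReal_mul (by positivity), ENNReal.ofReal_pow (by norm_num)]
          _ = ENNReal.ofReal (K ^ (1/α)) * (1 - ENNReal.ofReal ((1:ℝ)/2))⁻¹ := by
              rw [ENNReal.tsum_mul_left, ENNReal.tsum_geometric]
          _ = ENNReal.ofReal (2 * K ^ (1/α)) := by
              rw [hhalf, ENNReal.one_sub_inv_two, inv_inv, ENNReal.ofReal_mul (by norm_num),
                mul_comm]
              norm_num
end
end

section
/- Let f be a probability measure on ℝ³ with m₂(f) = 1 and with finite moments of all orders, let γ > 0, ν ≥ 0, α ≥ 1, σ ∈ (0,1], and let p ≥ 2 be an integer. Then ∑_{n=2}^p n^{ν/2} σ^n m_{2n+γ}(f)/(n!)^α ≥ σ^{−γ/2} ( ∑_{n=0}^p σ^n m_{2n}(f)/(n!)^α − e ), where e is Euler's number. -/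
open MeasureTheory Real Set

noncomputable section

/-- Lower bound of the weighted moment sum: for a probability measure `f` on `ℝ³` with
`m₂(f) = 1` and finite moments of all orders, `γ > 0`, `ν ≥ 0`, `α ≥ 1`, `σ ∈ (0,1]` and
any integer `p ≥ 2`,
`∑_{n=2}^p n^{ν/2} σ^n m_{2n+γ}(f)/(n!)^α ≥ σ^{-γ/2}(∑_{n=0}^p σ^n m_{2n}(f)/(n!)^α - e)`. -/
theorem series_lower_bound
    (f : Measure V3) (hf : IsProbabilityMeasure f) (hm2 : mom 2 f = 1)
    (hfin : ∀ q : ℝ, 0 ≤ q → Integrable (fun v : V3 => ‖v‖ ^ q) f)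
    (γ ν α σ : ℝ) (hγ : 0 < γ) (hν : 0 ≤ ν) (hα : 1 ≤ α) (hσ0 : 0 < σ) (hσ1 : σ ≤ 1)
    (p : ℕ) (hp : 2 ≤ p) :
    σ ^ (-γ / 2)
      * ((∑ n ∈ Finset.range (p + 1), σ ^ n * mom (2 * (n : ℝ)) f / (n.factorial : ℝ) ^ α)
          - Real.exp 1)
    ≤ ∑ n ∈ Finset.Icc 2 p,
        (n : ℝ) ^ (ν / 2) * σ ^ n * mom (2 * (n : ℝ) + γ) f / (n.factorial : ℝ) ^ α := by

  have hσγ2 : (0:ℝ) ≤ σ ^ (γ/2) := (Real.rpow_pos_of_pos hσ0 _).le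
  have hmomnn : ∀ q : ℝ, 0 ≤ mom q f :=
    fun q => integral_nonneg fun v => Real.rpow_nonneg (norm_nonneg v) q
  -- key integral bound
  have key : ∀ n : ℕ, mom (2*(n:ℝ)) f ≤ σ ^ (-(n:ℝ)) + σ ^ (γ/2) * mom (2*(n:ℝ)+γ) f := by
    intro n
    have hpt : ∀ v : V3, ‖v‖ ^ (2*(n:ℝ)) ≤ σ ^ (-(n:ℝ)) + σ ^ (γ/2) * ‖v‖ ^ (2*(n:ℝ)+γ) := by
      intro v
      set a := ‖v‖ with ha
      have ha0 : 0 ≤ a := norm_nonneg v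
      by_cases hc : a ≤ σ ^ ((-1:ℝ)/2)
      · have h1 : a ^ (2*(n:ℝ)) ≤ (σ ^ ((-1:ℝ)/2)) ^ (2*(n:ℝ)) :=
          Real.rpow_le_rpow ha0 hc (by positivity)
        have h2 : (σ ^ ((-1:ℝ)/2)) ^ (2*(n:ℝ)) = σ ^ (-(n:ℝ)) := by
          rw [← Real.rpow_mul hσ0.le]; ring_nf
        have h3 : 0 ≤ σ ^ (γ/2) * a ^ (2*(n:ℝ)+γ) :=
          mul_nonneg hσγ2 (Real.rpow_nonneg ha0 _)
        rw [h2] at h1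
        linarith
      · push_neg at hc
        have ha1 : 0 < a := lt_trans (Real.rpow_pos_of_pos hσ0 _) hc
        have heq : a ^ (2*(n:ℝ)) = a ^ (2*(n:ℝ)+γ) * a ^ (-γ) := by
          rw [← Real.rpow_add ha1]; ring_nf
        have h3 : a ^ (-γ) ≤ σ ^ (γ/2) := by
          have h4 : (σ ^ ((-1:ℝ)/2)) ^ (-γ) = σ ^ (γ/2) := by
            rw [← Real.rpow_mul hσ0.le]; ring_nf
          calc a ^ (-γ) ≤ (σ ^ ((-1:ℝ)/2)) ^ (-γ) :=
                Real.rpow_le_rpow_of_nonpos (Real.rpow_pos_of_pos hσ0 _) hc.le (by linarith)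
            _ = σ ^ (γ/2) := h4
        have h5 : a ^ (2*(n:ℝ)) ≤ σ ^ (γ/2) * a ^ (2*(n:ℝ)+γ) := by
          rw [heq, mul_comm]
          exact mul_le_mul_of_nonneg_right h3 (Real.rpow_nonneg ha0 _)
        have h6 : 0 ≤ σ ^ (-(n:ℝ)) := (Real.rpow_pos_of_pos hσ0 _).le
        linarith
    have hint1 : Integrable (fun v : V3 => ‖v‖ ^ (2*(n:ℝ))) f := hfin _ (by positivity)
    have hint2 : Integrable (fun v : V3 => ‖v‖ ^ (2*(n:ℝ)+γ)) f := hfin _ (by positivity)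
    have hmono := integral_mono hint1
      ((integrable_const (σ ^ (-(n:ℝ)))).add (hint2.const_mul (σ ^ (γ/2)))) hpt
    simp only [Pi.add_apply] at hmono
    rw [integral_add (integrable_const _) (hint2.const_mul _), integral_const,
      integral_const_mul] at hmono
    simpa [mom, measure_univ] using hmono
  have hfact : ∀ n : ℕ, (1:ℝ) ≤ (n.factorial : ℝ) := by
    intro n; exact_mod_cast Nat.one_le_iff_ne_zero.mpr n.factorial_ne_zero
  have hfactpow : ∀ n : ℕ, (0:ℝ) < (n.factorial : ℝ) ^ α := by
    intro n; exact Real.rpow_pos_of_pos (by linarith [hfact n]) _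
  -- per-term bound
  have hterm : ∀ n ∈ Finset.range (p+1),
      σ ^ n * mom (2*(n:ℝ)) f / (n.factorial : ℝ) ^ α
        ≤ 1 / (n.factorial : ℝ) ^ α
          + (if 2 ≤ n then
              σ ^ (γ/2) * ((n:ℝ) ^ (ν/2) * σ ^ n * mom (2*(n:ℝ)+γ) f / (n.factorial : ℝ) ^ α)
            else 0) := by
    intro n _
    by_cases h2 : 2 ≤ n
    · simp only [h2, if_true]
      have hσn : (0:ℝ) < σ ^ n := pow_pos hσ0 n
      have h1 : σ ^ n * mom (2*(n:ℝ)) f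
          ≤ σ ^ n * (σ ^ (-(n:ℝ)) + σ ^ (γ/2) * mom (2*(n:ℝ)+γ) f) :=
        mul_le_mul_of_nonneg_left (key n) hσn.le
      have h2' : σ ^ n * σ ^ (-(n:ℝ)) = 1 := by
        rw [← Real.rpow_natCast σ n, ← Real.rpow_add hσ0]
        simp
      have hnu : (1:ℝ) ≤ (n:ℝ) ^ (ν/2) :=
        Real.one_le_rpow (by exact_mod_cast Nat.one_le_of_lt h2) (by linarith)
      have h3 : σ ^ n * mom (2*(n:ℝ)) f ≤ 1 + σ ^ (γ/2) * ((n:ℝ) ^ (ν/2) * σ ^ n * mom (2*(n:ℝ)+γ) f) := by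
        have h4 : σ ^ n * mom (2*(n:ℝ)+γ) f ≤ (n:ℝ) ^ (ν/2) * σ ^ n * mom (2*(n:ℝ)+γ) f := by
          nlinarith [mul_le_mul_of_nonneg_right hnu (mul_nonneg hσn.le (hmomnn (2*(n:ℝ)+γ)))]
        have h4' := mul_le_mul_of_nonneg_left h4 hσγ2
        nlinarith [h1, h2', h4']
      calc σ ^ n * mom (2*(n:ℝ)) f / (n.factorial : ℝ) ^ α
          ≤ (1 + σ ^ (γ/2) * ((n:ℝ) ^ (ν/2) * σ ^ n * mom (2*(n:ℝ)+γ) f)) / (n.factorial : ℝ) ^ α :=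
            (div_le_div_iff_of_pos_right (hfactpow n)).mpr h3
        _ = 1 / (n.factorial : ℝ) ^ α
            + σ ^ (γ/2) * ((n:ℝ) ^ (ν/2) * σ ^ n * mom (2*(n:ℝ)+γ) f / (n.factorial : ℝ) ^ α) := by
            ring
    · simp only [h2, if_false, add_zero]
      interval_cases n
      · have hm0 : mom (2*((0:ℕ):ℝ)) f = 1 := by
          simp [mom, measure_univ]
        rw [hm0]
        simp
      · have hm1 : mom (2*((1:ℕ):ℝ)) f = 1 := by
          have : (2:ℝ)*((1:ℕ):ℝ) = 2 := by norm_num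
          rw [this, hm2]
        rw [hm1]
        have h1f : ((Nat.factorial 1 : ℕ) : ℝ) ^ α = 1 := by
          simp [Nat.factorial]
        rw [h1f]
        simpa using hσ1
  -- sum the bounds
  have hsum := Finset.sum_le_sum hterm
  rw [Finset.sum_add_distrib] at hsum
  have hfilter : (Finset.range (p+1)).filter (fun n => 2 ≤ n) = Finset.Icc 2 p := by
    ext n
    simp only [Finset.mem_filter, Finset.mem_range, Finset.mem_Icc, Nat.lt_succ_iff]
    omega
  rw [← Finset.sum_filter, hfilter, ← Finset.mul_sum] at hsum
  -- exp bound
  have hexp : ∑ n ∈ Finset.range (p+1), 1 / ((n.factorial : ℝ)) ^ α ≤ Real.exp 1 := by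
    calc ∑ n ∈ Finset.range (p+1), 1 / ((n.factorial : ℝ)) ^ α
        ≤ ∑ n ∈ Finset.range (p+1), 1 / (n.factorial : ℝ) := by
          apply Finset.sum_le_sum
          intro n _
          apply one_div_le_one_div_of_le (by linarith [hfact n])
          calc (n.factorial : ℝ) = (n.factorial : ℝ) ^ (1:ℝ) := (Real.rpow_one _).symm
            _ ≤ (n.factorial : ℝ) ^ α := Real.rpow_le_rpow_of_exponent_le (hfact n) hα
      _ ≤ Real.exp 1 := by
          have := Real.sum_le_exp_of_nonneg (x := 1) zero_le_one (p+1)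
          simpa [one_div] using this
  set R := ∑ n ∈ Finset.Icc 2 p,
      (n : ℝ) ^ (ν / 2) * σ ^ n * mom (2 * (n : ℝ) + γ) f / (n.factorial : ℝ) ^ α with hR
  have hkey : (∑ n ∈ Finset.range (p + 1), σ ^ n * mom (2 * (n : ℝ)) f / (n.factorial : ℝ) ^ α)
      - Real.exp 1 ≤ σ ^ (γ/2) * R := by linarith
  calc σ ^ (-γ / 2)
      * ((∑ n ∈ Finset.range (p + 1), σ ^ n * mom (2 * (n : ℝ)) f / (n.factorial : ℝ) ^ α)
          - Real.exp 1)
      ≤ σ ^ (-γ / 2) * (σ ^ (γ/2) * R) :=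
        mul_le_mul_of_nonneg_left hkey (Real.rpow_pos_of_pos hσ0 _).le
    _ = R := by
        rw [← mul_assoc, ← Real.rpow_add hσ0]
        have : -γ/2 + γ/2 = 0 := by ring
        rw [this, Real.rpow_zero, one_mul]
end
end
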